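/- arXiv:1311.6671 — 9 statements merged into one kernel-verified Lean document; each statement's English description precedes it below -/
import Mathlib

section
/- Let K ⊆ R^n be a symmetric convex body and Λ ⊆ R^n a full-rank lattice. Then for every positive integer p, (1 − 1/p) · μ(K, Λ) ≤ max over cosets c ∈ (1/p)Λ modulo Λ of d_K(Λ, c) ≤ μ(K, Λ), where the maximum is over any set of representatives of the quotient group ((1/p)Λ)/Λ. -/
open MeasureTheory Pointwise

/-- Distance from the point `x` to the set `L` (e.g. a lattice) under the gauge of `K`:
`d_K(L, x) = inf_{y ∈ L} ‖y - x‖_K`. -/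
noncomputable def gaugeDist {n : ℕ} (K L : Set (Fin n → ℝ)) (x : Fin n → ℝ) : ℝ :=
  ⨅ y : L, gauge K ((y : Fin n → ℝ) - x)

/-- The covering radius `μ(K, L) = inf {s ≥ 0 : L + sK = ℝⁿ}`. -/
noncomputable def covRad {n : ℕ} (K L : Set (Fin n → ℝ)) : ℝ :=
  sInf {s : ℝ | 0 ≤ s ∧ L + s • K = Set.univ}

lemma my_K_nhds {n : ℕ} {K : Set (Fin n → ℝ)} (hKconv : Convex ℝ K)
    (hKint : (interior K).Nonempty)
    (hKsym : K = -K) : K ∈ nhds (0 : Fin n → ℝ) := by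
  obtain ⟨z, hz⟩ := hKint
  have hint : interior (-K) = -interior K := by
    have := (Homeomorph.neg (Fin n → ℝ)).preimage_interior K
    have h2 : (Homeomorph.neg (Fin n → ℝ)) ⁻¹' K = -K := by ext x; simp [Set.mem_neg]
    have h3 : (Homeomorph.neg (Fin n → ℝ)) ⁻¹' interior K = -interior K := by
      ext x; simp [Set.mem_neg]
    rw [h2, h3] at this; exact this.symm
  have hz' : -z ∈ interior K := by
    have : -z ∈ -interior K := Set.neg_mem_neg.mpr hz
    rwa [← hint, ← hKsym] at this
  have h0 : (0 : Fin n → ℝ) ∈ interior K := by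
    have := (hKconv.interior) hz hz' (by norm_num : (0:ℝ) ≤ 1/2)
      (by norm_num : (0:ℝ) ≤ 1/2) (by norm_num)
    simpa using this
  exact mem_interior_iff_mem_nhds.mp h0

lemma my_mem_smul {n : ℕ} {K : Set (Fin n → ℝ)} (hKcpt : IsCompact K) (hKconv : Convex ℝ K)
    (hK0 : K ∈ nhds (0 : Fin n → ℝ)) {v : Fin n → ℝ} {t : ℝ}
    (ht : 0 < t) (h : gauge K v ≤ t) : v ∈ t • K := by
  have h1 : gauge K (t⁻¹ • v) ≤ 1 := by
    rw [gauge_smul_of_nonneg (by positivity : (0:ℝ) ≤ t⁻¹), smul_eq_mul]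
    rw [inv_mul_le_iff₀ ht]
    simpa using h
  have := (gauge_le_one_iff_mem_closure hKconv hK0).mp h1
  rw [hKcpt.isClosed.closure_eq] at this
  exact ⟨t⁻¹ • v, this, by simp [smul_smul, mul_inv_cancel₀ ht.ne']⟩

lemma my_cover_nonempty {n : ℕ} {K : Set (Fin n → ℝ)} (hK0 : K ∈ nhds (0 : Fin n → ℝ))
    (b : Module.Basis (Fin n) ℝ (Fin n → ℝ)) :
    ∃ s : ℝ, 0 ≤ s ∧
      (Submodule.span ℤ (Set.range ⇑b) : Set (Fin n → ℝ)) + s • K = Set.univ := by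
  obtain ⟨ε, hε, hball⟩ := Metric.mem_nhds_iff.mp hK0
  set C : ℝ := ∑ i, ‖b i‖ with hC
  have hC0 : 0 ≤ C := Finset.sum_nonneg fun i _ => norm_nonneg _
  set s : ℝ := (C + 1) / ε with hs
  have hs0 : 0 < s := by positivity
  refine ⟨s, hs0.le, Set.eq_univ_iff_forall.mpr fun x => ?_⟩
  set y : Fin n → ℝ := ∑ i, ((⌊b.repr x i⌋ : ℝ)) • b i with hy
  have hyL : y ∈ (Submodule.span ℤ (Set.range ⇑b) : Submodule ℤ (Fin n → ℝ)) := by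
    refine Submodule.sum_mem _ fun i _ => ?_
    rw [Int.cast_smul_eq_zsmul]
    exact Submodule.smul_mem _ _ (Submodule.subset_span ⟨i, rfl⟩)
  have hxy : x - y = ∑ i, Int.fract (b.repr x i) • b i := by
    conv_lhs => rw [← b.sum_repr x, hy, ← Finset.sum_sub_distrib]
    refine Finset.sum_congr rfl fun i _ => ?_
    rw [← sub_smul, Int.fract]
  have hnorm : ‖x - y‖ ≤ C := by
    rw [hxy]
    calc ‖∑ i, Int.fract (b.repr x i) • b i‖ ≤ ∑ i, ‖Int.fract (b.repr x i) • b i‖ :=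
          norm_sum_le _ _
      _ ≤ ∑ i, ‖b i‖ := by
          refine Finset.sum_le_sum fun i _ => ?_
          rw [norm_smul, Real.norm_eq_abs,
            abs_of_nonneg (Int.fract_nonneg _)]
          nlinarith [Int.fract_lt_one (b.repr x i), norm_nonneg (b i),
            Int.fract_nonneg (b.repr x i)]
  have hmem : x - y ∈ s • K := by
    refine ⟨s⁻¹ • (x - y), hball ?_, by simp [smul_smul, mul_inv_cancel₀ hs0.ne']⟩
    rw [Metric.mem_ball, dist_zero_right, norm_smul, Real.norm_eq_abs,
      abs_of_nonneg (by positivity : (0:ℝ) ≤ s⁻¹)]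
    have hsi : s⁻¹ = ε / (C + 1) := by rw [hs]; field_simp
    rw [hsi]
    calc ε / (C + 1) * ‖x - y‖ ≤ ε / (C + 1) * C := by
          apply mul_le_mul_of_nonneg_left hnorm (by positivity)
      _ < ε := by rw [div_mul_eq_mul_div, div_lt_iff₀ (by positivity)]; nlinarith
  rw [Set.mem_add]
  exact ⟨y, hyL, x - y, hmem, by abel⟩

/-- For a symmetric convex body `K`, a full-rank lattice
`Λ = span ℤ (range b)`, a positive integer `p`, and any set `R ⊆ (1/p)Λ` of
representatives of the cosets of `((1/p)Λ)/Λ`, one has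
`(1 - 1/p) μ(K, Λ) ≤ max_{c ∈ R} d_K(Λ, c) ≤ μ(K, Λ)`. -/
theorem stmt_3 (n : ℕ) (K : Set (Fin n → ℝ))
    (hKcpt : IsCompact K) (hKconv : Convex ℝ K) (hKint : (interior K).Nonempty)
    (hKsym : K = -K)
    (b : Module.Basis (Fin n) ℝ (Fin n → ℝ)) (p : ℕ) (hp : 0 < p)
    (R : Set (Fin n → ℝ))
    (hR : R ⊆ (p : ℝ)⁻¹ • (Submodule.span ℤ (Set.range b) : Set (Fin n → ℝ)))
    (hrep : ∀ c ∈ (p : ℝ)⁻¹ • (Submodule.span ℤ (Set.range b) : Set (Fin n → ℝ)),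
      ∃ r ∈ R, c - r ∈ (Submodule.span ℤ (Set.range b) : Set (Fin n → ℝ))) :
    (1 - 1 / (p : ℝ)) * covRad K (Submodule.span ℤ (Set.range b) : Set (Fin n → ℝ))
        ≤ (⨆ c : R, gaugeDist K (Submodule.span ℤ (Set.range b) : Set (Fin n → ℝ))
            (c : Fin n → ℝ))
    ∧ (⨆ c : R, gaugeDist K (Submodule.span ℤ (Set.range b) : Set (Fin n → ℝ))
          (c : Fin n → ℝ))
        ≤ covRad K (Submodule.span ℤ (Set.range b) : Set (Fin n → ℝ)) := by
  have hK0 : K ∈ nhds (0 : Fin n → ℝ) := my_K_nhds hKconv hKint hKsym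
  have habs : Absorbent ℝ K := absorbent_nhds_zero hK0
  have hsymm : ∀ z ∈ K, -z ∈ K := fun z hz => by rw [hKsym]; exact Set.neg_mem_neg.mpr hz
  have hp' : (0:ℝ) < p := by exact_mod_cast hp
  set L : Set (Fin n → ℝ) := (Submodule.span ℤ (Set.range ⇑b) : Set (Fin n → ℝ)) with hL
  have h0L : (0 : Fin n → ℝ) ∈ L := Submodule.zero_mem _
  haveI : Nonempty L := ⟨⟨0, h0L⟩⟩
  have gd_nonneg : ∀ x, 0 ≤ gaugeDist K L x := fun x =>
    Real.iInf_nonneg fun y => gauge_nonneg _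
  have gd_bdd : ∀ x : Fin n → ℝ,
      BddBelow (Set.range fun y : L => gauge K ((y : Fin n → ℝ) - x)) := fun x =>
    ⟨0, by rintro _ ⟨y, rfl⟩; exact gauge_nonneg _⟩
  have gd_le : ∀ (x w : Fin n → ℝ), w ∈ L → gaugeDist K L x ≤ gauge K (w - x) :=
    fun x w hw => ciInf_le (gd_bdd x) ⟨w, hw⟩
  have A : ∀ s, (0 ≤ s ∧ L + s • K = Set.univ) → ∀ x, gaugeDist K L x ≤ s := by
    rintro s ⟨hs0, hcov⟩ x
    have hx : x ∈ L + s • K := hcov ▸ Set.mem_univ x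
    rw [Set.mem_add] at hx
    obtain ⟨w, hw, z, hzK, hsum⟩ := hx
    obtain ⟨k, hk, rfl⟩ := hzK
    have hwx : w - x = -(s • k) := by rw [← hsum]; abel
    calc gaugeDist K L x ≤ gauge K (w - x) := gd_le x w hw
      _ = gauge K (s • k) := by rw [hwx, gauge_neg hsymm]
      _ ≤ s := by
          rw [gauge_smul_of_nonneg hs0, smul_eq_mul]
          nlinarith [gauge_le_one_of_mem hk, gauge_nonneg (s := K) k]
  obtain ⟨s₀, hs₀0, hs₀⟩ := my_cover_nonempty hK0 b
  have covSet_ne : Set.Nonempty {s : ℝ | 0 ≤ s ∧ L + s • K = Set.univ} := ⟨s₀, hs₀0, hs₀⟩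
  have hRne : R.Nonempty := by
    obtain ⟨r, hr, _⟩ := hrep 0 ⟨0, h0L, smul_zero _⟩
    exact ⟨r, hr⟩
  haveI : Nonempty R := hRne.to_subtype
  have bddS : BddAbove (Set.range fun c : R => gaugeDist K L (c : Fin n → ℝ)) :=
    ⟨s₀, by rintro _ ⟨c, rfl⟩; exact A s₀ ⟨hs₀0, hs₀⟩ _⟩
  set M := ⨆ c : R, gaugeDist K L (c : Fin n → ℝ) with hM
  have hM0 : 0 ≤ M := le_trans (gd_nonneg _) (le_ciSup bddS (Classical.arbitrary R))
  have hcovRad : covRad K L = sInf {s : ℝ | 0 ≤ s ∧ L + s • K = Set.univ} := rfl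
  have hUpper : M ≤ covRad K L := by
    rw [hcovRad]
    exact le_csInf covSet_ne fun s hs => ciSup_le fun c => A s hs _
  have key : ∀ s ∈ {s : ℝ | 0 ≤ s ∧ L + s • K = Set.univ}, covRad K L ≤ M + s / p := by
    rintro s ⟨hs0, hcov⟩
    refine le_of_forall_pos_le_add fun ε hε => ?_
    have ht0 : 0 < M + s / p + ε := by positivity
    rw [hcovRad]
    refine csInf_le ⟨0, fun t ht => ht.1⟩ ⟨ht0.le, Set.eq_univ_iff_forall.mpr fun x => ?_⟩
    have hx : (p:ℝ) • x ∈ L + s • K := hcov ▸ Set.mem_univ _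
    rw [Set.mem_add] at hx
    obtain ⟨z, hz, zz, hzzK, hsum⟩ := hx
    obtain ⟨k, hk, rfl⟩ := hzzK
    set y : Fin n → ℝ := (p:ℝ)⁻¹ • z with hy
    have hyM : y ∈ (p:ℝ)⁻¹ • L := Set.smul_mem_smul_set hz
    obtain ⟨r, hrR, hur⟩ := hrep y hyM
    have hdr : gaugeDist K L r ≤ M := le_ciSup bddS ⟨r, hrR⟩
    have hlt : gaugeDist K L r < M + ε := lt_of_le_of_lt hdr (by linarith)
    unfold gaugeDist at hlt
    obtain ⟨⟨w, hwL⟩, hwlt⟩ := exists_lt_of_ciInf_lt hlt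
    simp only at hwlt
    have hw'L : w + (y - r) ∈ L := Submodule.add_mem _ hwL hur
    have hz' : z = (p:ℝ) • x - s • k := by rw [← hsum]; abel
    have hxy : x - y = (s / p) • k := by
      rw [hy, hz', smul_sub, smul_smul, inv_mul_cancel₀ hp'.ne', one_smul, smul_smul,
        sub_sub_cancel, div_eq_mul_inv, mul_comm]
    have hsplit : x - (w + (y - r)) = (x - y) + (r - w) := by abel
    have hgauge : gauge K (x - (w + (y - r))) ≤ M + s / p + ε := by
      rw [hsplit]
      have h1 : gauge K (x - y) ≤ s / p := by
        rw [hxy, gauge_smul_of_nonneg (by positivity : (0:ℝ) ≤ s / p), smul_eq_mul]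
        nlinarith [gauge_le_one_of_mem hk, gauge_nonneg (s := K) k, div_nonneg hs0 hp'.le]
      have h2 : gauge K (r - w) ≤ M + ε := by
        have hneg : r - w = -(w - r) := by abel
        rw [hneg, gauge_neg hsymm]; exact hwlt.le
      calc gauge K ((x - y) + (r - w)) ≤ gauge K (x - y) + gauge K (r - w) :=
            gauge_add_le hKconv habs _ _
        _ ≤ M + s / p + ε := by linarith
    have hmem := my_mem_smul hKcpt hKconv hK0 ht0 hgauge
    rw [Set.mem_add]
    exact ⟨w + (y - r), hw'L, _, hmem, by abel⟩
  have hfin : (p:ℝ) * (covRad K L - M) ≤ covRad K L := by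
    rw [hcovRad]
    refine le_csInf covSet_ne fun s hs => ?_
    have hkey := key s hs
    rw [hcovRad] at hkey
    have h1 := mul_le_mul_of_nonneg_left hkey hp'.le
    have hps : (p:ℝ) * (M + s / (p:ℝ)) = (p:ℝ) * M + s := by field_simp
    rw [hps] at h1
    linarith
  constructor
  · rw [show (1 - 1/(p:ℝ)) = ((p:ℝ) - 1)/(p:ℝ) by field_simp, div_mul_eq_mul_div,
      div_le_iff₀ hp']
    nlinarith [hfin]
  · exact hUpper
end

section
/- Let K ⊆ R^n be a convex body and let Λ ⊆ R^n be a full-rank lattice with basis B = (b_1, …, b_n). Let π_1, …, π_n be the Gram–Schmidt projections of B, and let P∘(B) = B·[−1/2, 1/2)^n be the half-open fundamental parallelepiped of B. Then for every x ∈ R^n and every i ∈ {1, …, n}, the number of lattice points |π_i(K + x) ∩ π_i(Λ)| is at most N(K, P∘(B)). In other words, K is N(K, P∘(B))-Schnorr–Euchner enumerable with respect to Λ with basis B. -/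
open MeasureTheory Pointwise

noncomputable def gsProj {n : ℕ} (b : Module.Basis (Fin n) ℝ (EuclideanSpace ℝ (Fin n))) (i : Fin n) :
    EuclideanSpace ℝ (Fin n) → EuclideanSpace ℝ (Fin n) :=
  fun x => (Submodule.orthogonalProjectionOnto ((Submodule.span ℝ (⇑b '' {j : Fin n | j < i}))ᗮ) x :
    EuclideanSpace ℝ (Fin n))

def halfOpenPar {n : ℕ} (b : Module.Basis (Fin n) ℝ (EuclideanSpace ℝ (Fin n))) :
    Set (EuclideanSpace ℝ (Fin n)) :=
  {x | ∀ i, b.repr x i ∈ Set.Ico (-(1 : ℝ) / 2) (1 / 2)}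

def gsV {n : ℕ} (b : Module.Basis (Fin n) ℝ (EuclideanSpace ℝ (Fin n))) (i : Fin n) :
    Submodule ℝ (EuclideanSpace ℝ (Fin n)) :=
  Submodule.span ℝ (⇑b '' {j : Fin n | j < i})

lemma gsProj_def' {n : ℕ} (b : Module.Basis (Fin n) ℝ (EuclideanSpace ℝ (Fin n))) (i : Fin n)
    (x : EuclideanSpace ℝ (Fin n)) :
    gsProj b i x = (Submodule.orthogonalProjectionOnto ((gsV b i)ᗮ) x : EuclideanSpace ℝ (Fin n)) := rfl

section aux

variable {n : ℕ} (b : Module.Basis (Fin n) ℝ (EuclideanSpace ℝ (Fin n))) (i : Fin n)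



lemma sub_gsProj_mem (x : EuclideanSpace ℝ (Fin n)) : x - gsProj b i x ∈ gsV b i := by
  have h := Submodule.sub_starProjection_mem_orthogonal (K := (gsV b i)ᗮ) x
  rwa [Submodule.orthogonal_orthogonal] at h

lemma gsProj_eq_of_sub_mem {x y : EuclideanSpace ℝ (Fin n)} (h : x - y ∈ gsV b i) :
    gsProj b i x = gsProj b i y := by
  have h' : x - y ∈ ((gsV b i)ᗮ)ᗮ := Submodule.le_orthogonal_orthogonal _ h
  have h0 : Submodule.orthogonalProjectionOnto ((gsV b i)ᗮ) (x - y) = 0 :=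
    Submodule.orthogonalProjectionOnto_apply_of_mem_orthogonal h'
  have : Submodule.orthogonalProjectionOnto ((gsV b i)ᗮ) x - Submodule.orthogonalProjectionOnto ((gsV b i)ᗮ) y = 0 := by
    rw [← map_sub, h0]
  have := sub_eq_zero.mp this
  exact congrArg (Subtype.val) this

lemma sub_mem_of_gsProj_eq {x y : EuclideanSpace ℝ (Fin n)} (h : gsProj b i x = gsProj b i y) :
    x - y ∈ gsV b i := by
  have h1 := sub_gsProj_mem b i x
  have h2 := sub_gsProj_mem b i y
  have := Submodule.sub_mem _ h1 h2
  rw [h] at this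
  simpa using this

lemma repr_eq_zero_of_mem {z : EuclideanSpace ℝ (Fin n)} (hz : z ∈ gsV b i) {j : Fin n} (hj : i ≤ j) :
    b.repr z j = 0 := by
  have := (Module.Basis.mem_span_image (b := b)).mp hz
  by_contra h
  exact absurd (this (Finsupp.mem_support_iff.mpr h)) (by simpa using hj)

lemma mem_of_repr_eq_zero {z : EuclideanSpace ℝ (Fin n)} (hz : ∀ j, i ≤ j → b.repr z j = 0) :
    z ∈ gsV b i := by
  refine (Module.Basis.mem_span_image (b := b)).mpr ?_
  intro j hj
  simp only [Finset.mem_coe, Finsupp.mem_support_iff] at hj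
  simp only [Set.mem_setOf_eq]
  by_contra h
  exact hj (hz j (le_of_not_gt h))

end aux

section key

variable {n : ℕ} (b : Module.Basis (Fin n) ℝ (EuclideanSpace ℝ (Fin n))) (i : Fin n)

lemma repr_int {z : EuclideanSpace ℝ (Fin n)}
    (hz : z ∈ (Submodule.span ℤ (Set.range b) : Set (EuclideanSpace ℝ (Fin n)))) (j : Fin n) :
    ∃ m : ℤ, (m : ℝ) = b.repr z j := by
  have := (b.mem_span_iff_repr_mem ℤ z).mp (SetLike.mem_coe.mp hz) j
  obtain ⟨m, hm⟩ := this
  exact ⟨m, by simpa using hm⟩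

lemma subsingleton_key (s : EuclideanSpace ℝ (Fin n)) :
    (gsProj b i '' ({s} + halfOpenPar b) ∩
      gsProj b i '' (Submodule.span ℤ (Set.range b) : Set (EuclideanSpace ℝ (Fin n)))).Subsingleton := by
  rintro u ⟨⟨p, hp, rfl⟩, ⟨l, hl, hlu⟩⟩ v ⟨⟨q, hq, hqv⟩, ⟨m, hm, hmv⟩⟩
  -- p = s + a, q = s + a'
  rw [Set.singleton_add] at hp hq
  obtain ⟨a, ha, rfl⟩ := hp
  obtain ⟨a', ha', rfl⟩ := hq
  dsimp only at hlu hqv ⊢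
  -- reduce to gsProj b i l = gsProj b i m
  suffices h : gsProj b i l = gsProj b i m by rw [← hlu, h, hmv]
  -- key: for j ≥ i, repr l j = repr m j
  have hrepr : ∀ j : Fin n, i ≤ j → b.repr l j = b.repr m j := by
    intro j hj
    have h1 : b.repr l j = b.repr (s + a) j := by
      have := repr_eq_zero_of_mem b i (sub_mem_of_gsProj_eq b i hlu.symm) hj
      rw [map_sub] at this
      have : b.repr (s + a) j - b.repr l j = 0 := by simpa using this
      linarith
    have h2 : b.repr m j = b.repr (s + a') j := by
      have := repr_eq_zero_of_mem b i (sub_mem_of_gsProj_eq b i (hqv.trans hmv.symm)) hj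
      rw [map_sub] at this
      have : b.repr (s + a') j - b.repr m j = 0 := by simpa using this
      linarith
    obtain ⟨zl, hzl⟩ := repr_int b hl j
    obtain ⟨zm, hzm⟩ := repr_int b hm j
    have haj := ha j
    have ha'j := ha' j
    simp only [Set.mem_Ico] at haj ha'j
    rw [map_add] at h1 h2
    have hz : zl = zm := by
      have h3 : ((zl - zm : ℤ) : ℝ) = b.repr a j - b.repr a' j := by
        push_cast
        rw [hzl, hzm, h1, h2]
        simp only [Finsupp.add_apply]
        ring
      have habs : |((zl - zm : ℤ) : ℝ)| < 1 := by
        rw [h3, abs_lt]; constructor <;> linarith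
      have : zl - zm = 0 := by
        rwa [← Int.cast_abs, ← Int.cast_one, Int.cast_lt, Int.abs_lt_one_iff] at habs
      omega
    rw [← hzl, ← hzm, hz]
  refine gsProj_eq_of_sub_mem b i (mem_of_repr_eq_zero b i ?_)
  intro j hj
  rw [map_sub, Finsupp.sub_apply, hrepr j hj, sub_self]

end key

noncomputable def coveringNumber {α : Type*} [AddCommGroup α] (A B : Set α) : ℕ :=
  sInf {m : ℕ | ∃ T : Finset α, T.card = m ∧ A ⊆ ↑T + B}

def IsSE {n : ℕ} (b : Module.Basis (Fin n) ℝ (EuclideanSpace ℝ (Fin n)))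
    (L K : Set (EuclideanSpace ℝ (Fin n))) (α : ℝ) : Prop :=
  ∀ (i : Fin n) (t : EuclideanSpace ℝ (Fin n)),
    (gsProj b i '' (K + {t}) ∩ gsProj b i '' L).Finite ∧
    ((gsProj b i '' (K + {t}) ∩ gsProj b i '' L).ncard : ℝ) ≤ α

lemma exists_cover {n : ℕ} (b : Module.Basis (Fin n) ℝ (EuclideanSpace ℝ (Fin n)))
    {K : Set (EuclideanSpace ℝ (Fin n))} (hK : IsCompact K) :
    ∃ T : Finset (EuclideanSpace ℝ (Fin n)), K ⊆ ↑T + halfOpenPar b := by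
  set U : Set (EuclideanSpace ℝ (Fin n)) :=
    {x | ∀ j, b.repr x j ∈ Set.Ioo (-(1 : ℝ) / 2) (1 / 2)} with hU
  have hU0 : (0 : EuclideanSpace ℝ (Fin n)) ∈ U := by
    intro j; simp; norm_num
  have hUopen : IsOpen U := by
    have : U = ⋂ j, (fun x => b.repr x j) ⁻¹' Set.Ioo (-(1 : ℝ) / 2) (1 / 2) := by
      ext x; simp [hU]
    rw [this]
    refine isOpen_iInter_of_finite fun j => ?_
    have hc : Continuous ⇑((Finsupp.lapply j : ((Fin n) →₀ ℝ) →ₗ[ℝ] ℝ).comp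
        (b.repr.toLinearMap)) := LinearMap.continuous_of_finiteDimensional _
    exact isOpen_Ioo.preimage hc
  have hUP : U ⊆ halfOpenPar b := fun x hx j => ⟨(hx j).1.le, (hx j).2⟩
  obtain ⟨T, -, hT⟩ := hK.elim_nhds_subcover (fun x => {x} + halfOpenPar b) (fun x _ => by
    rw [mem_nhds_iff]
    refine ⟨{x} + U, Set.add_subset_add_left hUP, ?_, ?_⟩
    · rw [Set.singleton_add]
      exact hUopen.vadd x
    · exact ⟨x, rfl, 0, hU0, (add_zero x)⟩)
  refine ⟨T, fun y hy => ?_⟩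
  obtain ⟨x, hxT, hxy⟩ := Set.mem_iUnion₂.mp (hT hy)
  obtain ⟨x', rfl, a, ha, rfl⟩ := hxy
  exact Set.add_mem_add hxT ha

/-- For a convex body `K` and a full-rank lattice `Λ = span ℤ (range b)`,
for every `x` and every `i`, `|π_i(K + x) ∩ π_i(Λ)| ≤ N(K, P∘(B))`; i.e. `K` is
`N(K, P∘(B))`-Schnorr–Euchner enumerable with respect to `Λ` with basis `b`. -/
theorem stmt_4 (n : ℕ) (b : Module.Basis (Fin n) ℝ (EuclideanSpace ℝ (Fin n)))
    (K : Set (EuclideanSpace ℝ (Fin n)))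
    (hKcpt : IsCompact K) (hKconv : Convex ℝ K) (hKint : (interior K).Nonempty) :
    IsSE b (Submodule.span ℤ (Set.range b) : Set (EuclideanSpace ℝ (Fin n))) K
      (coveringNumber K (halfOpenPar b)) := by
  intro i t
  obtain ⟨T₀, hT₀⟩ := exists_cover b hKcpt
  have hne : {m : ℕ | ∃ T : Finset (EuclideanSpace ℝ (Fin n)),
      T.card = m ∧ K ⊆ ↑T + halfOpenPar b}.Nonempty := ⟨T₀.card, T₀, rfl, hT₀⟩
  obtain ⟨T, hTcard, hTcov⟩ := Nat.sInf_mem hne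
  set L : Set (EuclideanSpace ℝ (Fin n)) :=
    (Submodule.span ℤ (Set.range b) : Set (EuclideanSpace ℝ (Fin n))) with hL
  set S : Set (EuclideanSpace ℝ (Fin n)) :=
    gsProj b i '' (K + {t}) ∩ gsProj b i '' L with hS
  -- every point of S is covered by some translate τ + t
  have hcov : ∀ u ∈ S, ∃ τ ∈ T, u ∈ gsProj b i '' ({τ + t} + halfOpenPar b) := by
    rintro u ⟨⟨p, hp, rfl⟩, -⟩
    rw [Set.add_singleton] at hp
    obtain ⟨k, hk, rfl⟩ := hp
    obtain ⟨τ, hτ, a, ha, rfl⟩ := hTcov hk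
    refine ⟨τ, hτ, ⟨(τ + t) + a, ⟨τ + t, rfl, a, ha, rfl⟩, ?_⟩⟩
    dsimp only
    congr 1
    abel
  classical
  set f : EuclideanSpace ℝ (Fin n) → EuclideanSpace ℝ (Fin n) := fun u =>
    if h : ∃ τ ∈ T, u ∈ gsProj b i '' ({τ + t} + halfOpenPar b) then h.choose else 0 with hf
  have hmaps : ∀ u ∈ S, f u ∈ (T : Set (EuclideanSpace ℝ (Fin n))) := by
    intro u hu
    have h := hcov u hu
    rw [hf]; simp only [dif_pos h]
    exact h.choose_spec.1
  have hinj : Set.InjOn f S := by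
    intro u hu v hv hfu
    have h1 := hcov u hu
    have h2 := hcov v hv
    rw [hf] at hfu
    simp only [dif_pos h1, dif_pos h2] at hfu
    have hu' : u ∈ gsProj b i '' ({h1.choose + t} + halfOpenPar b) := h1.choose_spec.2
    have hv' : v ∈ gsProj b i '' ({h1.choose + t} + halfOpenPar b) := hfu ▸ h2.choose_spec.2
    exact subsingleton_key b i (h1.choose + t) ⟨hu', hu.2⟩ ⟨hv', hv.2⟩
  have hfin : S.Finite := Set.Finite.of_finite_image
    (Set.Finite.subset (T.finite_toSet) (Set.image_subset_iff.mpr hmaps)) hinj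
  refine ⟨hfin, ?_⟩
  have hcard : S.ncard ≤ T.card := by
    have := Set.ncard_le_ncard_of_injOn f hmaps hinj (T.finite_toSet)
    simpa using this
  calc (S.ncard : ℝ) ≤ (T.card : ℝ) := by exact_mod_cast hcard
    _ = coveringNumber K (halfOpenPar b) := by rw [hTcard]; rfl
end

section
/- Let K ⊆ R^n be a convex body that is α-Schnorr–Euchner enumerable with respect to a full-rank lattice Λ with basis B = (b_1, …, b_n). Let M ⊇ Λ be a superlattice of Λ of finite index [M : Λ], and let B_M be a directional basis of M with respect to B. Then K is (α · [M : Λ])-Schnorr–Euchner enumerable with respect to M with basis B_M. -/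
open MeasureTheory Pointwise


lemma gsProj_sub {n : ℕ} (b : Module.Basis (Fin n) ℝ (EuclideanSpace ℝ (Fin n))) (i : Fin n)
    (x y : EuclideanSpace ℝ (Fin n)) :
    gsProj b i (x - y) = gsProj b i x - gsProj b i y := by
  simp [gsProj, map_sub]

/-- If a convex body `K` is `α`-Schnorr–Euchner enumerable with respect to
a full-rank lattice `Λ = span ℤ (range b)` with basis `b`, and `M = span ℤ (range bM)` is a
superlattice of `Λ` of finite index `[M : Λ]`, with `bM` a directional basis of `M` with
respect to `b`, then `K` is `(α · [M : Λ])`-Schnorr–Euchner enumerable with respect to `M`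
with basis `bM`. -/
theorem stmt_6 (n : ℕ) (b bM : Module.Basis (Fin n) ℝ (EuclideanSpace ℝ (Fin n)))
    (K : Set (EuclideanSpace ℝ (Fin n)))
    (hKcpt : IsCompact K) (hKconv : Convex ℝ K) (hKint : (interior K).Nonempty)
    (α : ℝ)
    (hsup : Submodule.span ℤ (Set.range b) ≤ Submodule.span ℤ (Set.range bM))
    (hfin : 0 < (Submodule.span ℤ (Set.range b)).toAddSubgroup.relIndex
      (Submodule.span ℤ (Set.range bM)).toAddSubgroup)
    (hdir : ∀ i : Fin n,
      Submodule.span ℝ (⇑bM '' {j : Fin n | j ≤ i}) = Submodule.span ℝ (⇑b '' {j : Fin n | j ≤ i}))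
    (hse : IsSE b (Submodule.span ℤ (Set.range b) : Set (EuclideanSpace ℝ (Fin n))) K α) :
    IsSE bM (Submodule.span ℤ (Set.range bM) : Set (EuclideanSpace ℝ (Fin n))) K
      (α * ((Submodule.span ℤ (Set.range b)).toAddSubgroup.relIndex
        (Submodule.span ℤ (Set.range bM)).toAddSubgroup : ℝ)) := by

  classical
  have hproj : ∀ i, gsProj bM i = gsProj b i := by
    intro i
    have hspan : Submodule.span ℝ (⇑bM '' {j : Fin n | j < i})
        = Submodule.span ℝ (⇑b '' {j : Fin n | j < i}) := by
      apply le_antisymm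
      · rw [Submodule.span_le]
        rintro _ ⟨j, hj, rfl⟩
        have h1 : bM j ∈ Submodule.span ℝ (⇑bM '' {k : Fin n | k ≤ j}) :=
          Submodule.subset_span ⟨j, le_refl j, rfl⟩
        rw [hdir j] at h1
        refine Submodule.span_mono ?_ h1
        exact Set.image_mono fun k hk => show k < i from lt_of_le_of_lt hk hj
      · rw [Submodule.span_le]
        rintro _ ⟨j, hj, rfl⟩
        have h1 : b j ∈ Submodule.span ℝ (⇑b '' {k : Fin n | k ≤ j}) :=
          Submodule.subset_span ⟨j, le_refl j, rfl⟩
        rw [← hdir j] at h1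
        refine Submodule.span_mono ?_ h1
        exact Set.image_mono fun k hk => show k < i from lt_of_le_of_lt hk hj
    funext x
    exact congrArg (fun S : Submodule ℝ (EuclideanSpace ℝ (Fin n)) =>
      ((Submodule.orthogonalProjectionOnto Sᗮ x : EuclideanSpace ℝ (Fin n)))) hspan
  set Λ : Submodule ℤ (EuclideanSpace ℝ (Fin n)) := Submodule.span ℤ (Set.range b) with hΛ
  set M : Submodule ℤ (EuclideanSpace ℝ (Fin n)) := Submodule.span ℤ (Set.range bM) with hM
  set G := M.toAddSubgroup with hG
  set H' := Λ.toAddSubgroup.addSubgroupOf G with hH'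
  have hfinQ : Finite (G ⧸ H') := Nat.finite_of_card_ne_zero hfin.ne'
  have hcardQ : Nat.card (G ⧸ H') = Λ.toAddSubgroup.relIndex M.toAddSubgroup := rfl
  haveI := hfinQ
  haveI : Fintype (G ⧸ H') := Fintype.ofFinite _
  intro i t
  rw [hproj i]
  set rep : G ⧸ H' → EuclideanSpace ℝ (Fin n) := fun q => (q.out : EuclideanSpace ℝ (Fin n))
    with hrep
  set A : G ⧸ H' → Set (EuclideanSpace ℝ (Fin n)) :=
    fun q => gsProj b i '' (K + {t - rep q}) ∩ gsProj b i '' (Λ : Set (EuclideanSpace ℝ (Fin n)))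
    with hA
  have hAfin : ∀ q, (A q).Finite := fun q => (hse i (t - rep q)).1
  have hAcard : ∀ q, ((A q).ncard : ℝ) ≤ α := fun q => (hse i (t - rep q)).2
  have hcover : gsProj b i '' (K + {t}) ∩
      gsProj b i '' (M : Set (EuclideanSpace ℝ (Fin n))) ⊆
      ⋃ q : G ⧸ H', (fun a => a + gsProj b i (rep q)) '' A q := by
    rintro s ⟨hs1, x, hxM, rfl⟩
    set xG : G := ⟨x, hxM⟩ with hxG
    set q : G ⧸ H' := QuotientAddGroup.mk xG with hq
    refine Set.mem_iUnion.2 ⟨q, gsProj b i x - gsProj b i (rep q), ⟨?_, ?_⟩, by simp⟩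
    · obtain ⟨y, hy, hyx⟩ := hs1
      obtain ⟨k, hk, u, hu, rfl⟩ := hy
      rcases hu with rfl
      refine ⟨k + (u - rep q), ⟨k, hk, u - rep q, rfl, rfl⟩, ?_⟩
      have he : k + (u - rep q) = (k + u) - rep q := by abel
      rw [he, gsProj_sub, hyx]
    · have hq2 : (QuotientAddGroup.mk q.out : G ⧸ H') = QuotientAddGroup.mk xG := by
        rw [QuotientAddGroup.out_eq']
      have h2 : -q.out + xG ∈ H' := (QuotientAddGroup.eq).1 hq2
      have h3 : ((-q.out + xG : G) : EuclideanSpace ℝ (Fin n)) ∈ Λ :=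
        AddSubgroup.mem_addSubgroupOf.mp h2
      have h4 : x - rep q ∈ (Λ : Set (EuclideanSpace ℝ (Fin n))) := by
        have : ((-q.out + xG : G) : EuclideanSpace ℝ (Fin n)) = x - rep q := by
          simp [hrep, hxG, sub_eq_neg_add]
        rwa [this] at h3
      exact ⟨x - rep q, h4, gsProj_sub b i x (rep q)⟩
  set T : Finset (EuclideanSpace ℝ (Fin n)) := Finset.univ.biUnion
    (fun q : G ⧸ H' => ((hAfin q).toFinset.image (fun a => a + gsProj b i (rep q)))) with hT
  have hsubT : gsProj b i '' (K + {t}) ∩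
      gsProj b i '' (M : Set (EuclideanSpace ℝ (Fin n))) ⊆ ↑T := by
    refine hcover.trans ?_
    intro s hs
    obtain ⟨q, a, ha, rfl⟩ := Set.mem_iUnion.1 hs
    simp only [hT, Finset.coe_biUnion, Finset.coe_univ, Set.mem_iUnion]
    exact ⟨q, trivial, Finset.mem_image.2 ⟨a, (hAfin q).mem_toFinset.2 ha, rfl⟩⟩
  have hfin1 : (gsProj b i '' (K + {t}) ∩
      gsProj b i '' (M : Set (EuclideanSpace ℝ (Fin n)))).Finite :=
    Set.Finite.subset T.finite_toSet hsubT
  refine ⟨hfin1, ?_⟩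
  have hle1 : (gsProj b i '' (K + {t}) ∩
      gsProj b i '' (M : Set (EuclideanSpace ℝ (Fin n)))).ncard ≤ T.card := by
    rw [← Set.ncard_coe_finset]
    exact Set.ncard_le_ncard hsubT T.finite_toSet
  have hle2 : (T.card : ℝ) ≤ α * (Fintype.card (G ⧸ H') : ℝ) := by
    calc (T.card : ℝ) ≤ ∑ q : G ⧸ H',
          (((hAfin q).toFinset.image (fun a => a + gsProj b i (rep q))).card : ℝ) := by
          exact_mod_cast Finset.card_biUnion_le
      _ ≤ ∑ _q : G ⧸ H', α := by
          refine Finset.sum_le_sum fun q _ => ?_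
          calc (((hAfin q).toFinset.image (fun a => a + gsProj b i (rep q))).card : ℝ)
              ≤ ((hAfin q).toFinset.card : ℝ) := by exact_mod_cast Finset.card_image_le
            _ = ((A q).ncard : ℝ) := by
                rw [Set.ncard_eq_toFinset_card (A q) (hAfin q)]
            _ ≤ α := hAcard q
      _ = α * (Fintype.card (G ⧸ H') : ℝ) := by
          rw [Finset.sum_const, Finset.card_univ, nsmul_eq_mul, mul_comm]
  have hcard : (Fintype.card (G ⧸ H') : ℝ) =
      (Λ.toAddSubgroup.relIndex M.toAddSubgroup : ℝ) := by
    rw [← hcardQ, Nat.card_eq_fintype_card]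
  calc ((gsProj b i '' (K + {t}) ∩
        gsProj b i '' (M : Set (EuclideanSpace ℝ (Fin n)))).ncard : ℝ)
      ≤ (T.card : ℝ) := by exact_mod_cast hle1
    _ ≤ α * (Fintype.card (G ⧸ H') : ℝ) := hle2
    _ = α * (Λ.toAddSubgroup.relIndex M.toAddSubgroup : ℝ) := by rw [hcard]
end

section
/- Let K ⊆ R^n be a symmetric convex body that is α-Schnorr–Euchner enumerable with respect to a full-rank lattice Λ with basis B. Then for every convex body C ⊆ R^n, C is (α · N(C, K))-Schnorr–Euchner enumerable with respect to Λ with basis B. -/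
open MeasureTheory Pointwise


private lemma se_aux_union {E : Type*} (T : Finset E) (A : E → Set E) (α : ℝ)
    (hfin : ∀ s ∈ T, (A s).Finite) (hcard : ∀ s ∈ T, ((A s).ncard : ℝ) ≤ α) :
    (⋃ s ∈ T, A s).Finite ∧ (((⋃ s ∈ T, A s).ncard : ℝ)) ≤ T.card * α := by
  classical
  induction T using Finset.induction_on with
  | empty => simp
  | @insert a T ha ih =>
    have hfinT : ∀ s ∈ T, (A s).Finite := fun s hs => hfin s (Finset.mem_insert_of_mem hs)
    have hcardT : ∀ s ∈ T, ((A s).ncard : ℝ) ≤ α := fun s hs => hcard s (Finset.mem_insert_of_mem hs)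
    obtain ⟨ihf, ihc⟩ := ih hfinT hcardT
    have heq : (⋃ s ∈ insert a T, A s) = A a ∪ ⋃ s ∈ T, A s := by simp
    have hfa := hfin a (Finset.mem_insert_self a T)
    have hf : (⋃ s ∈ insert a T, A s).Finite := heq ▸ hfa.union ihf
    refine ⟨hf, ?_⟩
    have h1 : (A a ∪ ⋃ s ∈ T, A s).ncard ≤ (A a).ncard + (⋃ s ∈ T, A s).ncard :=
      Set.ncard_union_le _ _
    have h2 : ((A a).ncard : ℝ) ≤ α := hcard a (Finset.mem_insert_self a T)
    rw [heq, Finset.card_insert_of_notMem ha]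
    push_cast
    calc ((A a ∪ ⋃ s ∈ T, A s).ncard : ℝ) ≤ (A a).ncard + (⋃ s ∈ T, A s).ncard := by
          exact_mod_cast h1
      _ ≤ α + T.card * α := add_le_add h2 ihc
      _ = (T.card + 1) * α := by ring

private lemma se_exists_cover {n : ℕ} (K C : Set (EuclideanSpace ℝ (Fin n)))
    (hCcpt : IsCompact C) (hK0 : 0 ∈ interior K) :
    ∃ T : Finset (EuclideanSpace ℝ (Fin n)),
      T.card = coveringNumber C K ∧ C ⊆ ↑T + K := by
  classical
  have hcov : C ⊆ ⋃ c ∈ C, (c +ᵥ interior K) := by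
    intro x hx
    exact Set.mem_biUnion hx ⟨0, hK0, by simp⟩
  obtain ⟨T, hTC, hTfin, hTcov⟩ := hCcpt.elim_finite_subcover_image
    (fun c _ => isOpen_interior.vadd c) hcov
  have hsub : C ⊆ ↑hTfin.toFinset + K := by
    intro x hx
    obtain ⟨s, hs, hxs⟩ := Set.mem_iUnion₂.1 (hTcov hx)
    obtain ⟨k, hk, hxk⟩ := hxs
    exact ⟨s, by simpa using hs, k, interior_subset hk, by simpa using hxk⟩
  have hne : {m : ℕ | ∃ T : Finset (EuclideanSpace ℝ (Fin n)), T.card = m ∧ C ⊆ ↑T + K}.Nonempty :=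
    ⟨_, hTfin.toFinset, rfl, hsub⟩
  exact Nat.sInf_mem hne

/-- If a symmetric convex body `K` is `α`-Schnorr–Euchner enumerable with
respect to a full-rank lattice `Λ = span ℤ (range b)` with basis `b`, then every convex body
`C` is `(α · N(C, K))`-Schnorr–Euchner enumerable with respect to `Λ` with basis `b`. -/
theorem stmt_7 (n : ℕ) (b : Module.Basis (Fin n) ℝ (EuclideanSpace ℝ (Fin n)))
    (K C : Set (EuclideanSpace ℝ (Fin n)))
    (hKcpt : IsCompact K) (hKconv : Convex ℝ K) (hKint : (interior K).Nonempty)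
    (hKsym : K = -K)
    (hCcpt : IsCompact C) (hCconv : Convex ℝ C) (hCint : (interior C).Nonempty)
    (α : ℝ)
    (hse : IsSE b (Submodule.span ℤ (Set.range b) : Set (EuclideanSpace ℝ (Fin n))) K α) :
    IsSE b (Submodule.span ℤ (Set.range b) : Set (EuclideanSpace ℝ (Fin n))) C
      (α * (coveringNumber C K : ℝ)) := by
  classical
  -- 0 is in the interior of K by symmetry and convexity
  obtain ⟨x, hx⟩ := hKint
  have hx' : -x ∈ interior K := by
    have hxk : x ∈ interior (-K) := hKsym ▸ hx
    have h := (Homeomorph.neg (EuclideanSpace ℝ (Fin n))).preimage_interior K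
    rw [show (-K : Set (EuclideanSpace ℝ (Fin n))) =
        ⇑(Homeomorph.neg (EuclideanSpace ℝ (Fin n))) ⁻¹' K from rfl, ← h] at hxk
    exact hxk
  have hK0 : (0 : EuclideanSpace ℝ (Fin n)) ∈ interior K := by
    have hconv := hKconv.interior
    have := hconv hx hx' (by norm_num : (0:ℝ) ≤ 1/2) (by norm_num : (0:ℝ) ≤ 1/2) (by norm_num)
    simpa using this
  obtain ⟨T, hTcard, hTsub⟩ := se_exists_cover K C hCcpt hK0
  intro i t
  set L : Set (EuclideanSpace ℝ (Fin n)) :=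
    (Submodule.span ℤ (Set.range b) : Set (EuclideanSpace ℝ (Fin n)))
  set A : EuclideanSpace ℝ (Fin n) → Set (EuclideanSpace ℝ (Fin n)) :=
    fun s => gsProj b i '' (K + {s + t}) ∩ gsProj b i '' L with hA
  have hfin : ∀ s ∈ T, (A s).Finite := fun s _ => (hse i (s + t)).1
  have hcard : ∀ s ∈ T, ((A s).ncard : ℝ) ≤ α := fun s _ => (hse i (s + t)).2
  obtain ⟨hUf, hUc⟩ := se_aux_union T A α hfin hcard
  have hsub : gsProj b i '' (C + {t}) ∩ gsProj b i '' L ⊆ ⋃ s ∈ T, A s := by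
    rintro y ⟨⟨x, hxCt, rfl⟩, hyL⟩
    obtain ⟨c, hc, t0, ht0, rfl⟩ := hxCt
    have ht0' : t0 = t := ht0
    rw [ht0'] at hyL ⊢
    obtain ⟨s, hsT, k, hk, rfl⟩ := hTsub hc
    refine Set.mem_biUnion (by simpa using hsT) ?_
    exact ⟨⟨k + (s + t), ⟨k, hk, s + t, rfl, rfl⟩, by congr 1; simp only [add_comm, add_left_comm, add_assoc]⟩, hyL⟩
  refine ⟨hUf.subset hsub, ?_⟩
  calc ((gsProj b i '' (C + {t}) ∩ gsProj b i '' L).ncard : ℝ)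
      ≤ ((⋃ s ∈ T, A s).ncard : ℝ) := by
        exact_mod_cast Set.ncard_le_ncard hsub hUf
    _ ≤ T.card * α := hUc
    _ = α * (coveringNumber C K : ℝ) := by rw [hTcard]; ring
end

section
/- Let K ⊆ R^n be a symmetric convex body, let Λ ⊆ R^n be a full-rank lattice with λ = λ_1(K, Λ), and suppose c ∈ (1/3)Λ \ Λ satisfies d_K(Λ, c) ≥ λ. Then Λ' = Λ + Zc is a full-rank lattice containing Λ with index [Λ' : Λ] = 3 (so det(Λ') = det(Λ)/3), and λ_1(K, Λ') = λ_1(K, Λ). -/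
open MeasureTheory Pointwise

/-- The minimum distance `λ₁(K, L) = inf {‖y‖_K : y ∈ L, y ≠ 0}` of a lattice (set) `L`
with respect to the gauge of `K`. -/
noncomputable def lambda1 {n : ℕ} (K L : Set (Fin n → ℝ)) : ℝ :=
  sInf (gauge K '' (L \ {0}))

/-- Let `K` be a symmetric convex body, `Λ = span ℤ (range b)` a full-rank
lattice with `λ = λ₁(K, Λ)`, and `c ∈ (1/3)Λ \ Λ` with `d_K(Λ, c) ≥ λ`.  Then
`Λ' = Λ + ℤc` is a full-rank lattice containing `Λ` with `[Λ' : Λ] = 3`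
(so `det Λ' = det Λ / 3`), and `λ₁(K, Λ') = λ₁(K, Λ)`. -/
theorem stmt_10 (n : ℕ) (K : Set (Fin n → ℝ))
    (hKcpt : IsCompact K) (hKconv : Convex ℝ K) (hKint : (interior K).Nonempty)
    (hKsym : K = -K)
    (b : Module.Basis (Fin n) ℝ (Fin n → ℝ)) (c : Fin n → ℝ)
    (hc : c ∈ (3 : ℝ)⁻¹ • (Submodule.span ℤ (Set.range b) : Set (Fin n → ℝ)))
    (hcnot : c ∉ Submodule.span ℤ (Set.range b))
    (hd : lambda1 K (Submodule.span ℤ (Set.range b) : Set (Fin n → ℝ))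
      ≤ gaugeDist K (Submodule.span ℤ (Set.range b) : Set (Fin n → ℝ)) c) :
    Submodule.span ℤ (Set.range b) ≤ Submodule.span ℤ (Set.range b) ⊔ Submodule.span ℤ {c}
    ∧ (Submodule.span ℤ (Set.range b)).toAddSubgroup.relIndex
        (Submodule.span ℤ (Set.range b) ⊔ Submodule.span ℤ {c}).toAddSubgroup = 3
    ∧ (∃ b' : Module.Basis (Fin n) ℝ (Fin n → ℝ),
        Submodule.span ℤ (Set.range b') = Submodule.span ℤ (Set.range b) ⊔ Submodule.span ℤ {c}
        ∧ volume (ZSpan.fundamentalDomain b') = volume (ZSpan.fundamentalDomain b) / 3)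
    ∧ lambda1 K ((Submodule.span ℤ (Set.range b) ⊔ Submodule.span ℤ {c} : Submodule ℤ (Fin n → ℝ)) :
          Set (Fin n → ℝ))
      = lambda1 K (Submodule.span ℤ (Set.range b) : Set (Fin n → ℝ)) := by
  classical
  set Λ : Submodule ℤ (Fin n → ℝ) := Submodule.span ℤ (Set.range ⇑b) with hΛdef
  set Λ' : Submodule ℤ (Fin n → ℝ) := Λ ⊔ Submodule.span ℤ {c} with hΛ'def
  -- basic consequences of the hypotheses
  obtain ⟨v, hvΛ, hvc⟩ := Set.mem_smul_set.mp hc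
  have h3c : (3 : ℤ) • c ∈ Λ := by
    have h1 : (3 : ℤ) • c = (3 : ℝ) • c := by
      rw [← Int.cast_smul_eq_zsmul ℝ]; norm_num
    have h2 : (3 : ℝ) • c = v := by rw [← hvc, smul_smul]; norm_num
    rw [h1, h2]; exact hvΛ
  have hcne : c ≠ 0 := fun h => hcnot (h ▸ Λ.zero_mem)
  have hcΛ' : c ∈ Λ' := Submodule.mem_sup_right (Submodule.mem_span_singleton_self c)
  have hΛle : Λ ≤ Λ' := le_sup_left
  have h3cne : (3 : ℤ) • c ≠ 0 := by
    intro h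
    exact hcne (by simpa using smul_eq_zero.mp h)
  refine ⟨hΛle, ?_, ?_, ?_⟩
  · -- index 3
    haveI hp : Fact (Nat.Prime 3) := ⟨by norm_num⟩
    set π : Λ'.toAddSubgroup →+ (Fin n → ℝ) ⧸ Λ.toAddSubgroup :=
      (QuotientAddGroup.mk' Λ.toAddSubgroup).comp Λ'.toAddSubgroup.subtype with hπ
    have hker : π.ker = Λ.toAddSubgroup.addSubgroupOf Λ'.toAddSubgroup := by
      ext x
      simp [hπ, AddMonoidHom.mem_ker, QuotientAddGroup.eq_zero_iff,
        AddSubgroup.mem_addSubgroupOf]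
    set q : (Fin n → ℝ) ⧸ Λ.toAddSubgroup := QuotientAddGroup.mk' Λ.toAddSubgroup c with hq
    have hmkzsmul : ∀ (k : ℤ) (x : Fin n → ℝ),
        QuotientAddGroup.mk' Λ.toAddSubgroup (k • x)
          = k • QuotientAddGroup.mk' Λ.toAddSubgroup x := fun k x => map_zsmul _ k x
    have hq3 : (3 : ℕ) • q = 0 := by
      have h1 : (3 : ℕ) • q = QuotientAddGroup.mk' Λ.toAddSubgroup ((3 : ℤ) • c) := by
        rw [hq, ← map_nsmul]
        congr 1
      rw [h1, QuotientAddGroup.mk'_apply, QuotientAddGroup.eq_zero_iff]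
      simpa using h3c
    have hqne : q ≠ 0 := by
      rw [hq, QuotientAddGroup.mk'_apply, Ne, QuotientAddGroup.eq_zero_iff]
      simpa using hcnot
    have horder : addOrderOf q = 3 := addOrderOf_eq_prime hq3 hqne
    have hrange : π.range = AddSubgroup.zmultiples q := by
      apply le_antisymm
      · rintro _ ⟨⟨y, hy⟩, rfl⟩
        obtain ⟨a, ha, z, hz, rfl⟩ := Submodule.mem_sup.mp hy
        obtain ⟨k, rfl⟩ := Submodule.mem_span_singleton.mp hz
        refine ⟨k, ?_⟩
        have : π ⟨a + k • c, hy⟩ = QuotientAddGroup.mk' Λ.toAddSubgroup (a + k • c) := rfl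
        rw [this, map_add, hmkzsmul]
        have haz : QuotientAddGroup.mk' Λ.toAddSubgroup a = 0 := by
          rw [QuotientAddGroup.mk'_apply, QuotientAddGroup.eq_zero_iff]
          simpa using ha
        rw [haz, zero_add, hq]
      · rw [AddSubgroup.zmultiples_le]
        exact ⟨⟨c, hcΛ'⟩, rfl⟩
    show (Λ.toAddSubgroup.addSubgroupOf Λ'.toAddSubgroup).index = 3
    rw [← hker, AddSubgroup.index_ker, hrange, Nat.card_zmultiples, horder]
  · -- basis and volume
    obtain ⟨f, hf⟩ := (Submodule.mem_span_range_iff_exists_fun ℤ).mp h3c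
    set a' : Fin n → ℤ := fun i => (f i + 1) % 3 - 1 with ha'
    have ha'div : ∀ i, 3 * ((f i - a' i) / 3) = f i - a' i := by
      intro i; simp only [ha']; omega
    have ha'bd : ∀ i, a' i = -1 ∨ a' i = 0 ∨ a' i = 1 := by
      intro i; simp only [ha']; omega
    set t : Fin n → ℝ := ∑ i, ((f i - a' i) / 3) • b i with ht
    have htΛ : t ∈ Λ := Submodule.sum_mem _ fun i _ =>
      Submodule.smul_mem _ _ (Submodule.subset_span ⟨i, rfl⟩)
    set c₁ : Fin n → ℝ := c - t with hc₁def
    have h3c₁ : (3 : ℤ) • c₁ = ∑ i, a' i • b i := by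
      rw [hc₁def, smul_sub, ht, Finset.smul_sum, ← hf, ← Finset.sum_sub_distrib]
      refine Finset.sum_congr rfl fun i _ => ?_
      rw [smul_smul, ← sub_smul]
      congr 1
      have := ha'div i
      omega
    have hexj : ∃ j, a' j ≠ 0 := by
      by_contra h
      push_neg at h
      have h0 : (3 : ℤ) • c₁ = 0 := by
        rw [h3c₁]
        exact Finset.sum_eq_zero fun i _ => by rw [h i, zero_smul]
      have hc₁0 : c₁ = 0 := by
        have h0' : ((3 : ℤ) : ℝ) • c₁ = 0 := by rw [Int.cast_smul_eq_zsmul ℝ]; exact h0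
        have := smul_eq_zero.mp h0'
        simpa using this
      have hct : c = t := by
        have := sub_eq_zero.mp hc₁0
        exact this
      exact hcnot (hct ▸ htΛ)
    obtain ⟨j, hj⟩ := hexj
    have hj1 : a' j = 1 ∨ a' j = -1 := by have := ha'bd j; omega
    set w : Fin n → (Fin n → ℝ) := Function.update (⇑b) j c₁ with hw
    have hwj : w j = c₁ := Function.update_self _ _ _
    have hwi : ∀ i, i ≠ j → w i = b i := fun i hij => Function.update_of_ne hij _ _
    have hc₁sum : c₁ = ∑ i, ((a' i : ℝ) / 3) • b i := by
      have h1 : (3 : ℝ) • c₁ = ∑ i, (a' i : ℝ) • b i := by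
        rw [show (3 : ℝ) = ((3 : ℤ) : ℝ) by norm_num, Int.cast_smul_eq_zsmul ℝ, h3c₁]
        exact Finset.sum_congr rfl fun i _ => (Int.cast_smul_eq_zsmul ℝ (a' i) (b i)).symm
      have h2 := congrArg (fun x => (3 : ℝ)⁻¹ • x) h1
      simp only [smul_smul, Finset.smul_sum] at h2
      norm_num at h2
      rw [h2]
      refine Finset.sum_congr rfl fun i _ => ?_
      congr 1
      ring
    have hdet : b.det w = (a' j : ℝ) / 3 := by
      calc b.det w = ∑ i, b.det (Function.update (⇑b) j (((a' i : ℝ) / 3) • b i)) := by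
            rw [hw, hc₁sum]
            exact b.det.toMultilinearMap.map_update_sum Finset.univ j
              (fun i => ((a' i : ℝ) / 3) • b i) ⇑b
        _ = ∑ i, ((a' i : ℝ) / 3) • b.det (Function.update (⇑b) j (b i)) :=
            Finset.sum_congr rfl fun i _ =>
              b.det.toMultilinearMap.map_update_smul ⇑b j _ (b i)
        _ = ((a' j : ℝ) / 3) • b.det (Function.update (⇑b) j (b j)) := by
            refine Finset.sum_eq_single_of_mem j (Finset.mem_univ j) fun i _ hij => ?_
            have hzero : b.det (Function.update (⇑b) j (b i)) = 0 := by
              refine b.det.map_eq_zero_of_eq _ (?_ : _ = _) hij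
              rw [Function.update_of_ne hij, Function.update_self]
            rw [hzero, smul_zero]
        _ = (a' j : ℝ) / 3 := by
            rw [Function.update_eq_self, Module.Basis.det_self, smul_eq_mul, mul_one]
    have hunit : IsUnit (b.det w) := by
      rw [hdet]
      refine isUnit_iff_ne_zero.mpr ?_
      rcases hj1 with h | h <;> rw [h] <;> norm_num
    obtain ⟨hli, hspan⟩ := (Module.Basis.is_basis_iff_det b).mpr hunit
    refine ⟨Module.Basis.mk hli hspan.ge, ?_, ?_⟩
    · -- span equality
      rw [Module.Basis.coe_mk]
      have hc₁w : c₁ ∈ Submodule.span ℤ (Set.range w) :=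
        Submodule.subset_span ⟨j, hwj⟩
      have hbw : ∀ i, b i ∈ Submodule.span ℤ (Set.range w) := by
        intro i
        by_cases hij : i = j
        · subst hij
          have hsum : ∑ k, a' k • b k
              = a' i • b i + ∑ k ∈ Finset.univ.erase i, a' k • b k :=
            (Finset.add_sum_erase _ _ (Finset.mem_univ i)).symm
          have hkey : a' i • b i
              = (3 : ℤ) • c₁ - ∑ k ∈ Finset.univ.erase i, a' k • b k := by
            rw [h3c₁, hsum]; abel
          have hmem : a' i • b i ∈ Submodule.span ℤ (Set.range w) := by
            rw [hkey]
            refine Submodule.sub_mem _ (Submodule.smul_mem _ _ hc₁w)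
              (Submodule.sum_mem _ fun k hk => Submodule.smul_mem _ _
                (Submodule.subset_span ⟨k, hwi k (Finset.ne_of_mem_erase hk)⟩))
          rcases hj1 with h | h
          · rwa [h, one_smul] at hmem
          · rw [h, neg_smul, one_smul] at hmem
            simpa using Submodule.neg_mem _ hmem
        · exact Submodule.subset_span ⟨i, hwi i hij⟩
      have hΛw : Λ ≤ Submodule.span ℤ (Set.range w) := by
        rw [hΛdef, Submodule.span_le]
        rintro x ⟨i, rfl⟩
        exact hbw i
      apply le_antisymm
      · rw [Submodule.span_le]
        rintro x ⟨i, rfl⟩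
        by_cases hij : i = j
        · subst hij
          rw [hwj, hc₁def]
          exact Λ'.sub_mem hcΛ' (hΛle htΛ)
        · rw [hwi i hij]
          exact hΛle (Submodule.subset_span ⟨i, rfl⟩)
      · rw [hΛ'def]
        refine sup_le hΛw ?_
        rw [Submodule.span_le, Set.singleton_subset_iff]
        have hcc : c = c₁ + t := by rw [hc₁def]; abel
        show c ∈ Submodule.span ℤ (Set.range w)
        rw [hcc]
        exact Submodule.add_mem _ hc₁w (hΛw htΛ)
    · -- volume
      have hmat : (Matrix.of ⇑(Module.Basis.mk hli hspan.ge)).det = b.det w * (Matrix.of ⇑b).det := by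
        rw [Module.Basis.coe_mk]
        have hprod : Matrix.of w = (b.toMatrix w).transpose * Matrix.of ⇑b := by
          ext i l
          simp only [Matrix.mul_apply, Matrix.of_apply, Matrix.transpose_apply,
            Module.Basis.toMatrix_apply]
          have h1 := congrFun (b.sum_repr (w i)) l
          rw [Finset.sum_apply] at h1
          simp only [Pi.smul_apply, smul_eq_mul] at h1
          exact h1.symm
        rw [hprod, Matrix.det_mul, Matrix.det_transpose, ← Module.Basis.det_apply]
      rw [ZSpan.volume_fundamentalDomain, ZSpan.volume_fundamentalDomain, hmat, hdet, abs_mul]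
      have habs : |(a' j : ℝ) / 3| = 1 / 3 := by
        rcases hj1 with h | h <;> rw [h] <;> norm_num
      rw [habs]
      rw [show (1 : ℝ) / 3 * |(Matrix.of ⇑b).det| = |(Matrix.of ⇑b).det| / 3 by ring]
      rw [ENNReal.ofReal_div_of_pos (by norm_num : (0 : ℝ) < 3)]
      norm_num
  · -- lambda1 equality
    have hsym : ∀ x ∈ K, -x ∈ K := by
      intro x hx
      rw [hKsym]
      simpa [Set.mem_neg] using hx
    have hbdd' : BddBelow (gauge K '' ((Λ' : Set (Fin n → ℝ)) \ {0})) := by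
      refine ⟨0, ?_⟩
      rintro r ⟨x, -, rfl⟩
      exact gauge_nonneg x
    have hbdd : BddBelow (gauge K '' ((Λ : Set (Fin n → ℝ)) \ {0})) := by
      refine ⟨0, ?_⟩
      rintro r ⟨x, -, rfl⟩
      exact gauge_nonneg x
    have hneΛ : (((Λ : Set (Fin n → ℝ))) \ {0}).Nonempty := ⟨(3 : ℤ) • c, h3c, h3cne⟩
    have hneΛ' : (((Λ' : Set (Fin n → ℝ))) \ {0}).Nonempty := ⟨c, hcΛ', hcne⟩
    refine le_antisymm ?_ ?_
    · exact csInf_le_csInf hbdd' (hneΛ.image _)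
        (Set.image_mono (fun x hx => ⟨hΛle hx.1, hx.2⟩))
    · refine le_csInf (hneΛ'.image _) ?_
      rintro r ⟨y, ⟨hyΛ', hy0⟩, rfl⟩
      obtain ⟨a, ha, z, hz, rfl⟩ := Submodule.mem_sup.mp hyΛ'
      obtain ⟨k, rfl⟩ := Submodule.mem_span_singleton.mp hz
      have hbddD : BddBelow (Set.range fun y : (Λ : Set (Fin n → ℝ)) =>
          gauge K ((y : Fin n → ℝ) - c)) := by
        refine ⟨0, ?_⟩
        rintro r ⟨y, rfl⟩
        exact gauge_nonneg _
      have hk : k % 3 = 0 ∨ k % 3 = 1 ∨ k % 3 = 2 := by omega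
      have ha₂ : a + (k / 3) • ((3 : ℤ) • c) ∈ Λ := Λ.add_mem ha (Λ.smul_mem _ h3c)
      rcases hk with h0 | h1 | h2
      · have hk0 : k = 3 * (k / 3) := by omega
        have hyΛ : a + k • c ∈ Λ := by
          have : a + k • c = a + (k / 3) • ((3 : ℤ) • c) := by
            rw [smul_smul]
            congr 2
            omega
          rw [this]; exact ha₂
        exact csInf_le hbdd ⟨_, ⟨hyΛ, hy0⟩, rfl⟩
      · have key : a + k • c = -((-(a + (k / 3) • ((3 : ℤ) • c))) - c) := by
          have hkc : k • c = ((k / 3) • ((3 : ℤ) • c)) + c := by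
            nth_rewrite 1 [show k = k / 3 * 3 + 1 by omega]
            rw [add_smul, one_smul, mul_smul]
          rw [hkc]; abel
        calc lambda1 K (Λ : Set (Fin n → ℝ)) ≤ gaugeDist K (Λ : Set (Fin n → ℝ)) c := hd
          _ ≤ gauge K (((-(a + (k / 3) • ((3 : ℤ) • c)) : Fin n → ℝ)) - c) :=
              ciInf_le hbddD (⟨_, Λ.neg_mem ha₂⟩ : (Λ : Set (Fin n → ℝ)))
          _ = gauge K (a + k • c) := by rw [← gauge_neg hsym (_ - c), ← key]
      · have key : a + k • c = ((a + (k / 3) • ((3 : ℤ) • c)) + (3 : ℤ) • c) - c := by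
          have hkc : k • c = ((k / 3) • ((3 : ℤ) • c)) + (3 : ℤ) • c - c := by
            nth_rewrite 1 [show k = k / 3 * 3 + 2 by omega]
            rw [add_smul, mul_smul]
            abel
          rw [hkc]; abel
        calc lambda1 K (Λ : Set (Fin n → ℝ)) ≤ gaugeDist K (Λ : Set (Fin n → ℝ)) c := hd
          _ ≤ gauge K ((((a + (k / 3) • ((3 : ℤ) • c)) + (3 : ℤ) • c : Fin n → ℝ)) - c) :=
              ciInf_le hbddD (⟨_, Λ.add_mem ha₂ h3c⟩ : (Λ : Set (Fin n → ℝ)))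
          _ = gauge K (a + k • c) := by rw [← key]
end

section
/- Let K_0 ⊆ R^n be a convex body and let Λ ⊆ R^n be a full-rank lattice that is K_0-covering, i.e. Λ + K_0 = R^n. Then there exists a measurable set F ⊆ K_0 that tiles R^n with respect to Λ, i.e. every point of R^n lies in exactly one translate F + y with y ∈ Λ; in particular vol_n(F) = det(Λ). -/
open MeasureTheory Pointwise

/-- Let `K₀ ⊆ ℝⁿ` be a convex body and `Λ = span ℤ (range b)` a full-rank
lattice that is `K₀`-covering (`Λ + K₀ = ℝⁿ`).  Then there exists a measurable set `F ⊆ K₀`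
tiling `ℝⁿ` with respect to `Λ` (every point lies in exactly one translate `F + y`, `y ∈ Λ`);
in particular `vol(F) = det(Λ)`. -/
theorem stmt_14 (n : ℕ) (K0 : Set (Fin n → ℝ))
    (hKcpt : IsCompact K0) (hKconv : Convex ℝ K0) (hKint : (interior K0).Nonempty)
    (b : Module.Basis (Fin n) ℝ (Fin n → ℝ))
    (hcov : (Submodule.span ℤ (Set.range b) : Set (Fin n → ℝ)) + K0 = Set.univ) :
    ∃ F : Set (Fin n → ℝ), MeasurableSet F ∧ F ⊆ K0
      ∧ (∀ x : Fin n → ℝ, ∃! y : Fin n → ℝ,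
          y ∈ (Submodule.span ℤ (Set.range b) : Set (Fin n → ℝ)) ∧ x - y ∈ F)
      ∧ volume F = volume (ZSpan.fundamentalDomain b) := by
  classical
  set Λ := Submodule.span ℤ (Set.range b) with hΛ
  set D := ZSpan.fundamentalDomain b with hD
  obtain ⟨e, he⟩ := exists_surjective_nat Λ
  -- the pieces of the fundamental domain
  set T  := fun k =>
    {z | z ∈ D ∧ z - (e k : Fin n → ℝ) ∈ K0 ∧ ∀ j < k, z - (e j : Fin n → ℝ) ∉ K0} with hT
  have hK0m : MeasurableSet K0 := hKcpt.measurableSet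
  have hDm : MeasurableSet D := ZSpan.fundamentalDomain_measurableSet b
  have hTm : ∀ k, MeasurableSet (T k) := by
    intro k
    have : T k = D ∩ ((· - (e k : Fin n → ℝ)) ⁻¹' K0) ∩
        ⋂ (j : ℕ) (_ : j < k), ((· - (e j : Fin n → ℝ)) ⁻¹' K0)ᶜ := by
      ext z
      simp only [hT, Set.mem_setOf_eq, Set.mem_inter_iff, Set.mem_preimage,
        Set.mem_iInter, Set.mem_compl_iff]
      tauto
    rw [this]
    exact ((hDm.inter ((measurable_sub_const _) hK0m)).inter
      (MeasurableSet.iInter fun j => MeasurableSet.iInter fun _ =>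
        ((measurable_sub_const _) hK0m).compl))
  -- T is a partition of D
  have hTsubD : ∀ k, T k ⊆ D := fun k z hz => hz.1
  have hTdisj : ∀ k m, k ≠ m → Disjoint (T k) (T m) := by
    intro k m hkm
    rcases hkm.lt_or_gt with h | h
    · exact Set.disjoint_left.mpr fun z hk hm => hm.2.2 k h hk.2.1
    · exact Set.disjoint_left.mpr fun z hk hm => hk.2.2 m h hm.2.1
  have hTcover : ∀ z ∈ D, ∃ k, z ∈ T k := by
    intro z hz
    have hzuniv : z ∈ (Λ ) + K0 := by rw [hcov]; trivial
    obtain ⟨y, hy, c, hc, hyc⟩ := hzuniv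
    obtain ⟨k0, hk0⟩ := he ⟨y, hy⟩
    have hex : ∃ k, z - (e k : Fin n → ℝ) ∈ K0 := by
      refine ⟨k0, ?_⟩
      rw [hk0]
      simpa [← hyc] using hc
    refine ⟨Nat.find hex, hz, Nat.find_spec hex, fun j hj => Nat.find_min hex hj⟩
  have hTunion : ⋃ k, T k = D := by
    apply Set.Subset.antisymm (Set.iUnion_subset hTsubD)
    intro z hz
    obtain ⟨k, hk⟩ := hTcover z hz
    exact Set.mem_iUnion.mpr ⟨k, hk⟩
  -- the tile F
  set F  := ⋃ k, (· + (e k : Fin n → ℝ)) ⁻¹' T k with hF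
  have hFm : MeasurableSet F :=
    MeasurableSet.iUnion fun k => (measurable_add_const _) (hTm k)
  have hFsub : F ⊆ K0 := by
    intro x hx
    obtain ⟨k, hk⟩ := Set.mem_iUnion.mp hx
    have := hk.2.1
    simpa using this
  -- uniqueness helper: points of D congruent mod Λ
  refine ⟨F, hFm, hFsub, ?_, ?_⟩
  · intro x
    obtain ⟨v, hv, hvuniq⟩ := ZSpan.exist_unique_vadd_mem_fundamentalDomain b x
    have hvx : (v : Fin n → ℝ) + x ∈ D := hv
    obtain ⟨k, hk⟩ := hTcover _ hvx
    refine ⟨(e k : Fin n → ℝ) - (v : Fin n → ℝ), ⟨?_, ?_⟩, ?_⟩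
    · exact sub_mem (e k).2 v.2
    · apply Set.mem_iUnion.mpr ⟨k, ?_⟩
      show x - ((e k : Fin n → ℝ) - (v : Fin n → ℝ)) + (e k : Fin n → ℝ) ∈ T k
      have : x - ((e k : Fin n → ℝ) - (v : Fin n → ℝ)) + (e k : Fin n → ℝ) = (v : Fin n → ℝ) + x := by ring
      rw [this]; exact hk
    · rintro y ⟨hyΛ, hyF⟩
      obtain ⟨m, hm⟩ := Set.mem_iUnion.mp hyF
      have hmD : x - y + (e m : Fin n → ℝ) ∈ T m := hm
      set w : Λ := ⟨(e m : Fin n → ℝ) - y, sub_mem (e m).2 hyΛ⟩ with hw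
      have hwx : w +ᵥ x ∈ D := by
        show (w : Fin n → ℝ) + x ∈ D
        have : (w : Fin n → ℝ) + x = x - y + (e m : Fin n → ℝ) := by simp [hw]; ring
        rw [this]; exact (hTsubD m) hmD
      have hwv : w = v := hvuniq w hwx
      have hzm : (v : Fin n → ℝ) + x ∈ T m := by
        have : (v : Fin n → ℝ) + x = x - y + (e m : Fin n → ℝ) := by
          rw [← hwv]; simp [hw]; ring
        rw [this]; exact hmD
      have hmk : m = k := by
        by_contra hne
        exact Set.disjoint_left.mp (hTdisj m k hne) hzm hk
      have : (e m : Fin n → ℝ) - y = (v : Fin n → ℝ) := by rw [← hwv]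
      rw [hmk] at this
      linear_combination -this
  · -- volume
    have hdisjF : Pairwise (Function.onFun Disjoint
        (fun k => (· + (e k : Fin n → ℝ)) ⁻¹' T k)) := by
      intro k m hkm
      refine Set.disjoint_left.mpr fun x hk hm => ?_
      have hk' : x + (e k : Fin n → ℝ) ∈ T k := hk
      have hm' : x + (e m : Fin n → ℝ) ∈ T m := hm
      obtain ⟨v, hv, hvuniq⟩ := ZSpan.exist_unique_vadd_mem_fundamentalDomain b x
      have h1 : e k = v := hvuniq (e k)
        (show ((e k : Fin n → ℝ)) + x ∈ D by rw [add_comm]; exact hTsubD k hk')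
      have h2 : e m = v := hvuniq (e m)
        (show ((e m : Fin n → ℝ)) + x ∈ D by rw [add_comm]; exact hTsubD m hm')
      have hekm : (e k : Fin n → ℝ) = (e m : Fin n → ℝ) := by rw [h1, h2]
      rcases hkm.lt_or_gt with h | h
      · exact hm'.2.2 k h (by rw [← hekm] at hm' ⊢; simpa using hk'.2.1)
      · exact hk'.2.2 m h (by rw [hekm] at hk' ⊢; simpa using hm'.2.1)
    have h1 : volume F = ∑' k, volume ((· + (e k : Fin n → ℝ)) ⁻¹' T k) :=
      measure_iUnion hdisjF fun k => (measurable_add_const _) (hTm k)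
    have h2 : volume D = ∑' k, volume (T k) := by
      rw [← hTunion]
      exact measure_iUnion (fun k m hkm => hTdisj k m hkm) hTm
    rw [h1, h2]
    congr 1
    ext k
    exact measure_preimage_add_right volume _ _
end

section
/- Let K_0, K ⊆ R^n be convex bodies and let Λ ⊆ R^n be a full-rank lattice that is K_0-covering (Λ + K_0 = R^n). Then for every ε > 0: vol_n(K) ≤ ε^n · det(Λ) · |εΛ ∩ (K − εK_0)| ≤ vol_n(K + ε(K_0 − K_0)). -/
open MeasureTheory Pointwise Set
open scoped ENNReal ENat

section counting

variable {α ι : Type*} [Countable ι] [MeasurableSpace α] (μ : MeasureTheory.Measure α)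

lemma tsum_meas_eq_lintegral_encard (A : ι → Set α) (hA : ∀ i, MeasurableSet (A i)) :
    ∑' i, μ (A i) = ∫⁻ x, ({i | x ∈ A i}.encard : ℝ≥0∞) ∂μ := by
  have h1 : ∀ i, μ (A i) = ∫⁻ x, (A i).indicator (fun _ => (1 : ℝ≥0∞)) x ∂μ := by
    intro i
    rw [lintegral_indicator (hA i), setLIntegral_const, one_mul]
  calc ∑' i, μ (A i)
      = ∑' i, ∫⁻ x, (A i).indicator (fun _ => (1 : ℝ≥0∞)) x ∂μ := tsum_congr h1
    _ = ∫⁻ x, ∑' i, (A i).indicator (fun _ => (1 : ℝ≥0∞)) x ∂μ :=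
        (lintegral_tsum (fun i => (measurable_one.indicator (hA i)).aemeasurable)).symm
    _ = ∫⁻ x, ({i | x ∈ A i}.encard : ℝ≥0∞) ∂μ := lintegral_congr fun x => ?_
  have h2 : ∀ i, (A i).indicator (fun _ => (1 : ℝ≥0∞)) x
      = ({i | x ∈ A i}).indicator (fun _ => (1 : ℝ≥0∞)) i := by
    intro i; by_cases h : x ∈ A i <;> simp [h]
  rw [tsum_congr h2, ← tsum_subtype, ENNReal.tsum_set_one]

lemma tsum_meas_le_card_mul (A : ι → Set α) (hA : ∀ i, MeasurableSet (A i)) {D : Set α}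
    (hD : MeasurableSet D) (hAD : ∀ i, A i ⊆ D) {N : ℕ}
    (hcount : ∀ x ∈ D, {i | x ∈ A i}.encard ≤ N) :
    ∑' i, μ (A i) ≤ N * μ D := by
  rw [tsum_meas_eq_lintegral_encard μ A hA]
  calc ∫⁻ x, ({i | x ∈ A i}.encard : ℝ≥0∞) ∂μ
      ≤ ∫⁻ x, D.indicator (fun _ => (N : ℝ≥0∞)) x ∂μ := by
        refine lintegral_mono fun x => ?_
        by_cases hx : x ∈ D
        · simpa [hx] using (ENat.toENNReal_le.mpr (hcount x hx)).trans_eq (by simp)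
        · have : {i | x ∈ A i} = ∅ := by
            ext i; simp only [mem_setOf_eq, mem_empty_iff_false, iff_false]
            exact fun h => hx (hAD i h)
          simp [this, hx]
    _ = N * μ D := by rw [lintegral_indicator hD, setLIntegral_const]

lemma card_mul_le_tsum_meas (A : ι → Set α) (hA : ∀ i, MeasurableSet (A i)) {D : Set α}
    (hD : MeasurableSet D) {N : ℕ}
    (hcount : ∀ x ∈ D, (N : ℕ∞) ≤ {i | x ∈ A i}.encard) :
    N * μ D ≤ ∑' i, μ (A i) := by
  rw [tsum_meas_eq_lintegral_encard μ A hA]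
  calc (N : ℝ≥0∞) * μ D = ∫⁻ x, D.indicator (fun _ => (N : ℝ≥0∞)) x ∂μ := by
        rw [lintegral_indicator hD, setLIntegral_const]
    _ ≤ ∫⁻ x, ({i | x ∈ A i}.encard : ℝ≥0∞) ∂μ := by
        refine lintegral_mono fun x => ?_
        by_cases hx : x ∈ D
        · simpa [hx] using (ENat.toENNReal_le.mpr (hcount x hx)).trans_eq' (by simp)
        · simp [hx]

end counting

section core

set_option synthInstance.maxHeartbeats 1000000 in
set_option maxHeartbeats 1000000 in
lemma stmt15_core {n : ℕ} (b : Module.Basis (Fin n) ℝ (Fin n → ℝ)) (K0 K : Set (Fin n → ℝ))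
    (hK0 : IsCompact K0) (hK : IsCompact K)
    (hcov : (Submodule.span ℤ (Set.range b) : Set (Fin n → ℝ)) + K0 = Set.univ) :
    volume K ≤ volume (ZSpan.fundamentalDomain b) *
        (Nat.card ↥((Submodule.span ℤ (Set.range b) : Set (Fin n → ℝ)) ∩ (K - K0)) : ℝ≥0∞)
    ∧ volume (ZSpan.fundamentalDomain b) *
        (Nat.card ↥((Submodule.span ℤ (Set.range b) : Set (Fin n → ℝ)) ∩ (K - K0)) : ℝ≥0∞)
      ≤ volume (K + (K0 - K0)) := by
  classical
  set Λ := Submodule.span ℤ (Set.range b) with hΛ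
  set S : Set (Fin n → ℝ) := (Λ : Set (Fin n → ℝ)) ∩ (K - K0) with hS
  set D := ZSpan.fundamentalDomain b with hDdef
  have hDmeas : MeasurableSet D := ZSpan.fundamentalDomain_measurableSet b
  have hfund := ZSpan.isAddFundamentalDomain' b (volume : Measure (Fin n → ℝ))
  set G := Λ.toAddSubgroup with hG
  have hcount : Countable G := inferInstanceAs (Countable Λ)
  -- finiteness of S
  have hΛclosed : IsClosed (Λ : Set (Fin n → ℝ)) := by
    have := AddSubgroup.isClosed_of_discrete (H := Λ.toAddSubgroup)
    exact this
  have hSfin : S.Finite := by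
    rw [hS, Set.inter_comm]
    have : DiscreteTopology ((Λ : Set (Fin n → ℝ)) : Type _) :=
      inferInstanceAs (DiscreteTopology Λ)
    exact Metric.finite_isBounded_inter_isClosed (isDiscrete_iff_discreteTopology.mpr this) (hK.isBounded.sub hK0.isBounded) hΛclosed
  set N := Nat.card ↥S with hN
  have hScard : S.encard = (N : ℕ∞) := by
    rw [hN, Nat.card_coe_set_eq, hSfin.cast_ncard_eq]
  -- decomposition of an arbitrary point
  have hdec : ∀ x : Fin n → ℝ, ∃ γ ∈ Λ, ∃ k ∈ K0, γ + k = x := by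
    intro x
    have hx : x ∈ (Λ : Set (Fin n → ℝ)) + K0 := by rw [hcov]; trivial
    exact Set.mem_add.mp hx
  -- membership in vadd sets
  have hvadd : ∀ (g : G) (T : Set (Fin n → ℝ)) (x : Fin n → ℝ),
      x ∈ (g +ᵥ T) ↔ ∃ t ∈ T, (g : Fin n → ℝ) + t = x := by
    intro g T x
    exact Set.mem_vadd_set
  constructor
  · -- upper bound
    rw [hfund.measure_eq_tsum K]
    have := tsum_meas_le_card_mul (volume : Measure (Fin n → ℝ))
      (fun g : G => (g +ᵥ K) ∩ D)
      (fun g => ((hK.isClosed.measurableSet).const_vadd g).inter hDmeas)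
      hDmeas (fun g => Set.inter_subset_right) (N := N) ?_
    · exact this.trans_eq (mul_comm _ _)
    · intro x _
      obtain ⟨γ, hγ, k₀, hk₀, hx⟩ := hdec x
      have hinj : Set.InjOn (fun g : G => γ - (g : Fin n → ℝ)) {g : G | x ∈ (g +ᵥ K) ∩ D} := by
        intro g _ g' _ h
        exact Subtype.ext (sub_right_injective (G := Fin n → ℝ) h)
      calc {g : G | x ∈ (g +ᵥ K) ∩ D}.encard
          = ((fun g : G => γ - (g : Fin n → ℝ)) '' {g : G | x ∈ (g +ᵥ K) ∩ D}).encard :=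
            (hinj.encard_image).symm
        _ ≤ S.encard := by
            refine Set.encard_le_encard ?_
            rintro - ⟨g, hg, rfl⟩
            obtain ⟨hgK, -⟩ := hg
            obtain ⟨k, hk, hgk⟩ := (hvadd g K x).mp hgK
            refine ⟨Λ.sub_mem hγ g.2, ?_⟩
            have heq : γ - (g : Fin n → ℝ) = k - k₀ := by
              have h1 : (g : Fin n → ℝ) + k = γ + k₀ := by rw [hgk, hx]
              linear_combination -h1
            show γ - (g : Fin n → ℝ) ∈ K - K0
            rw [heq]
            exact Set.sub_mem_sub hk hk₀
        _ = (N : ℕ∞) := hScard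
  · -- lower bound
    set U : Set (Fin n → ℝ) := S + K0 with hU
    have hUcpt : IsCompact U := hSfin.isCompact.add hK0
    have hUsub : U ⊆ K + (K0 - K0) := by
      rintro u hu
      obtain ⟨s, hs, k, hk, hsk⟩ := Set.mem_add.mp hu
      obtain ⟨a, ha, c, hc, hac⟩ := Set.mem_sub.mp hs.2
      have : u = a + (k - c) := by
        have h1 : a - c = s := hac
        have h2 : s + k = u := hsk
        linear_combination h2.symm + h1.symm
      rw [this]
      exact Set.add_mem_add ha (Set.sub_mem_sub hk hc)
    refine le_trans ?_ (measure_mono hUsub)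
    rw [hfund.measure_eq_tsum U, mul_comm]
    refine card_mul_le_tsum_meas (volume : Measure (Fin n → ℝ))
      (fun g : G => (g +ᵥ U) ∩ D)
      (fun g => ((hUcpt.isClosed.measurableSet).const_vadd g).inter hDmeas)
      hDmeas (N := N) ?_
    intro x hxD
    obtain ⟨γ, hγ, k₀, hk₀, hx⟩ := hdec x
    have hinj : Set.InjOn (fun s : Fin n → ℝ => γ - s) S := fun s _ s' _ h =>
      sub_right_injective (G := Fin n → ℝ) h
    calc (N : ℕ∞) = S.encard := hScard.symm
      _ = ((fun s : Fin n → ℝ => γ - s) '' S).encard := (hinj.encard_image).symm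
      _ ≤ ((fun g : G => (g : Fin n → ℝ)) '' {g : G | x ∈ (g +ᵥ U) ∩ D}).encard := by
          refine Set.encard_le_encard ?_
          rintro - ⟨s, hs, rfl⟩
          refine ⟨⟨γ - s, G.sub_mem hγ hs.1⟩, ⟨?_, hxD⟩, rfl⟩
          refine (hvadd _ U x).mpr ⟨s + k₀, Set.add_mem_add hs hk₀, ?_⟩
          show (γ - s) + (s + k₀) = x
          linear_combination hx
      _ = {g : G | x ∈ (g +ᵥ U) ∩ D}.encard := Function.Injective.encard_image Subtype.coe_injective _

end core


/-- Let `K₀, K ⊆ ℝⁿ` be convex bodies and `Λ = span ℤ (range b)` a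
full-rank lattice that is `K₀`-covering (`Λ + K₀ = ℝⁿ`).  Then for every `ε > 0`,
`vol(K) ≤ εⁿ · det(Λ) · |εΛ ∩ (K − εK₀)| ≤ vol(K + ε(K₀ − K₀))`. -/
theorem stmt_15 (n : ℕ) (K0 K : Set (Fin n → ℝ))
    (hK0cpt : IsCompact K0) (hK0conv : Convex ℝ K0) (hK0int : (interior K0).Nonempty)
    (hKcpt : IsCompact K) (hKconv : Convex ℝ K) (hKint : (interior K).Nonempty)
    (b : Module.Basis (Fin n) ℝ (Fin n → ℝ))
    (hcov : (Submodule.span ℤ (Set.range b) : Set (Fin n → ℝ)) + K0 = Set.univ)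
    (ε : ℝ) (hε : 0 < ε) :
    volume K ≤ ENNReal.ofReal (ε ^ n) * volume (ZSpan.fundamentalDomain b) *
        (Nat.card ↥((ε • (Submodule.span ℤ (Set.range b) : Set (Fin n → ℝ)))
          ∩ (K - ε • K0)) : ENNReal)
    ∧ ENNReal.ofReal (ε ^ n) * volume (ZSpan.fundamentalDomain b) *
        (Nat.card ↥((ε • (Submodule.span ℤ (Set.range b) : Set (Fin n → ℝ)))
          ∩ (K - ε • K0)) : ENNReal)
      ≤ volume (K + ε • (K0 - K0)) := by
  classical
  have hεne : ε ≠ 0 := ne_of_gt hε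
  set b' : Module.Basis (Fin n) ℝ (Fin n → ℝ) := b.unitsSMul (fun _ => Units.mk0 ε hεne) with hb'def
  have hb' : ∀ i, b' i = ε • b i := fun i => b.unitsSMul_apply i
  -- the scaled lattice
  have hspan : (Submodule.span ℤ (Set.range ⇑b') : Set (Fin n → ℝ))
      = ε • (Submodule.span ℤ (Set.range ⇑b) : Set (Fin n → ℝ)) := by
    set f : (Fin n → ℝ) →ₗ[ℤ] (Fin n → ℝ) := (LinearMap.lsmul ℝ (Fin n → ℝ) ε).restrictScalars ℤ
      with hf
    have hrange : Set.range ⇑b' = f '' Set.range ⇑b := by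
      rw [← Set.range_comp]
      refine congrArg _ (funext fun i => ?_)
      simp [hf, hb']
    rw [hrange, ← Submodule.map_span, Submodule.map_coe]
    ext x
    simp [hf, Set.mem_smul_set]
  -- covering by the scaled lattice and scaled body
  have hcov' : (Submodule.span ℤ (Set.range ⇑b') : Set (Fin n → ℝ)) + ε • K0 = Set.univ := by
    rw [hspan, ← smul_add, hcov, smul_set_univ₀ hεne]
  -- the core lemma for the scaled data
  obtain ⟨h1, h2⟩ := stmt15_core b' (ε • K0) K (hK0cpt.smul ε) hKcpt hcov'
  rw [hspan] at h1 h2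
  -- volume of the scaled fundamental domain
  have hvol : volume (ZSpan.fundamentalDomain b')
      = ENNReal.ofReal (ε ^ n) * volume (ZSpan.fundamentalDomain b) := by
    rw [ZSpan.volume_fundamentalDomain, ZSpan.volume_fundamentalDomain]
    have hm : (Matrix.of ⇑b') = ε • (Matrix.of ⇑b) := by
      ext i j
      show b' i j = ε • (b i j)
      rw [hb' i]
      rfl
    rw [hm, Matrix.det_smul, Fintype.card_fin, abs_mul, abs_pow, abs_of_pos hε,
      ← ENNReal.ofReal_mul (by positivity)]
  rw [hvol] at h1 h2
  -- scaled difference body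
  have hdiff : ε • K0 - ε • K0 = ε • (K0 - K0) := by
    rw [sub_eq_add_neg, sub_eq_add_neg, smul_add, Set.smul_set_neg]
  rw [hdiff] at h2
  exact ⟨h1, h2⟩
end

section
/- Let K_0, K ⊆ R^n be convex bodies, let Λ ⊆ R^n be a full-rank lattice that is K_0-covering (Λ + K_0 = R^n), and suppose additionally that K_0 is symmetric (K_0 = −K_0) and K_0 ⊆ K − c for some c ∈ R^n. Then for every ε > 0: vol_n(K) ≤ ε^n · det(Λ) · |εΛ ∩ ((1 + ε)K − εc)| ≤ (1 + 2ε)^n · vol_n(K). -/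
open MeasureTheory Pointwise Submodule

variable {n : ℕ}

-- helper: vadd of a set by a vector as a preimage
lemma vadd_set_eq_preimage (v : Fin n → ℝ) (X : Set (Fin n → ℝ)) :
    v +ᵥ X = (fun x => x - v) ⁻¹' X := by
  ext x
  simp [Set.mem_vadd_set, Set.mem_preimage]
  constructor
  · rintro ⟨y, hy, rfl⟩; simpa using hy
  · intro h; exact ⟨x - v, h, by abel⟩

lemma smul_set_sub_singleton (a : ℝ) (X : Set (Fin n → ℝ)) (d : Fin n → ℝ) :
    a • (X - {d}) = a • X - {a • d} := by
  ext x
  constructor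
  · rintro ⟨y, hy, rfl⟩
    obtain ⟨z, hz, w, hw, rfl⟩ := Set.mem_sub.1 hy
    have hw' : w = d := hw
    refine Set.mem_sub.2 ⟨a • z, ⟨z, hz, rfl⟩, a • d, Set.mem_singleton _, ?_⟩
    rw [hw']
    show a • z - a • d = a • (z - d)
    rw [smul_sub]
  · intro hx
    obtain ⟨y, hy, w, hw, rfl⟩ := Set.mem_sub.1 hx
    have hw' : w = a • d := hw
    obtain ⟨z, hz, rfl⟩ := hy
    refine ⟨z - d, Set.mem_sub.2 ⟨z, hz, d, Set.mem_singleton _, rfl⟩, ?_⟩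
    show a • (z - d) = a • z - w
    rw [hw', smul_sub]

lemma sub_singleton_eq_vadd (X : Set (Fin n → ℝ)) (d : Fin n → ℝ) :
    X - {d} = (-d) +ᵥ X := by
  rw [vadd_set_eq_preimage]
  ext x
  simp [Set.mem_sub, sub_neg_eq_add]
  constructor
  · rintro ⟨y, hy, rfl⟩; simpa using hy
  · intro h; exact ⟨x + d, h, by abel⟩

/-- There is a fundamental domain for `span ℤ (range b)` inside any closed covering set `K0`. -/
lemma exists_fd (b : Module.Basis (Fin n) ℝ (Fin n → ℝ)) (K0 : Set (Fin n → ℝ))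
    (hK0m : MeasurableSet K0)
    (hcov : (Submodule.span ℤ (Set.range b) : Set (Fin n → ℝ)) + K0 = Set.univ) :
    ∃ F0 : Set (Fin n → ℝ), F0 ⊆ K0 ∧ MeasurableSet F0 ∧
      IsAddFundamentalDomain (span ℤ (Set.range b)) F0 volume := by
  classical
  set L := span ℤ (Set.range b) with hL
  obtain ⟨e, he⟩ := exists_surjective_nat ↥L
  set G : ℕ → Set (Fin n → ℝ) :=
    fun i => ZSpan.fundamentalDomain b ∩ (fun x => x + (e i : Fin n → ℝ)) ⁻¹' K0 with hG
  set F0 : Set (Fin n → ℝ) := ⋃ i, (fun x => x - (e i : Fin n → ℝ)) ⁻¹' disjointed G i with hF0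
  have hGm : ∀ i, MeasurableSet (G i) := fun i =>
    (ZSpan.fundamentalDomain_measurableSet b).inter (hK0m.preimage (measurable_add_const _))
  have hsub : F0 ⊆ K0 := by
    rintro x hx
    obtain ⟨i, hi⟩ := Set.mem_iUnion.1 hx
    have := (disjointed_subset G i hi).2
    simpa using this
  refine ⟨F0, hsub, ?_, ?_⟩
  · exact MeasurableSet.iUnion fun i =>
      (MeasurableSet.disjointed hGm i).preimage (measurable_sub_const _)
  refine IsAddFundamentalDomain.mk' (MeasurableSet.iUnion fun i =>
      (MeasurableSet.disjointed hGm i).preimage (measurable_sub_const _)).nullMeasurableSet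
      fun x => ?_
  obtain ⟨g0, hg00, hg0u'⟩ := ZSpan.exist_unique_vadd_mem_fundamentalDomain b x
  have hg0 : (g0 : Fin n → ℝ) + x ∈ ZSpan.fundamentalDomain b := hg00
  have hg0u : ∀ y : ↥L, (y : Fin n → ℝ) + x ∈ ZSpan.fundamentalDomain b → y = g0 :=
    fun y hy => hg0u' y hy
  have hcover : ∃ i, ((g0 : Fin n → ℝ) + x) ∈ G i := by
    have hmem : ((g0 : Fin n → ℝ) + x) ∈ ((L : Set (Fin n → ℝ)) + K0) := by
      rw [hcov]; trivial
    obtain ⟨l, hl, k, hk, hlk⟩ := Set.mem_add.1 hmem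
    obtain ⟨i, hi⟩ := he ⟨-l, neg_mem hl⟩
    refine ⟨i, hg0, ?_⟩
    have : (g0 : Fin n → ℝ) + x + (-l) = k := by rw [← hlk]; abel
    simp only [Set.mem_preimage, hi]
    show (g0 : Fin n → ℝ) + x + ((⟨-l, neg_mem hl⟩ : ↥L) : Fin n → ℝ) ∈ K0
    rw [show ((⟨-l, neg_mem hl⟩ : ↥L) : Fin n → ℝ) = -l from rfl, this]
    exact hk
  have hcover' : ((g0 : Fin n → ℝ) + x) ∈ ⋃ i, disjointed G i := by
    rw [iUnion_disjointed]; exact Set.mem_iUnion.2 hcover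
  obtain ⟨i, hfi⟩ := Set.mem_iUnion.1 hcover'
  refine ⟨e i + g0, ?_, ?_⟩
  · show ((e i + g0 : ↥L) : Fin n → ℝ) + x ∈ F0
    refine Set.mem_iUnion.2 ⟨i, ?_⟩
    simp only [Set.mem_preimage]
    have : ((e i + g0 : ↥L) : Fin n → ℝ) + x - (e i : Fin n → ℝ) = (g0 : Fin n → ℝ) + x := by
      rw [Submodule.coe_add]; abel
    rwa [this]
  · rintro g' hg''
    have hg' : (g' : Fin n → ℝ) + x ∈ F0 := hg''
    obtain ⟨j, hj'⟩ := Set.mem_iUnion.1 hg'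
    have hj : (g' : Fin n → ℝ) + x - (e j : Fin n → ℝ) ∈ disjointed G j := hj'
    have heq : (g' : Fin n → ℝ) + x - (e j : Fin n → ℝ)
        = ((g' - e j : ↥L) : Fin n → ℝ) + x := by
      rw [Submodule.coe_sub]; abel
    have hjF : ((g' - e j : ↥L) : Fin n → ℝ) + x ∈ ZSpan.fundamentalDomain b := by
      have := (disjointed_subset G j hj).1
      rwa [heq] at this
    have hge : g' - e j = g0 := hg0u _ hjF
    have hfj : ((g0 : Fin n → ℝ) + x) ∈ disjointed G j := by
      rw [heq, hge] at hj
      exact hj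
    have hij : j = i := by
      by_contra hne
      exact Set.notMem_empty _
        (((disjoint_disjointed G) hne).le_bot ⟨hfj, hfi⟩)
    rw [← hij]
    have : g' = (g' - e j) + e j := by abel
    rw [this, hge]; abel


/-- Let `K₀, K ⊆ ℝⁿ` be convex bodies, `Λ = span ℤ (range b)` a
`K₀`-covering full-rank lattice, with `K₀` symmetric and `K₀ ⊆ K − c` for some `c`.
Then for every `ε > 0`,
`vol(K) ≤ εⁿ · det(Λ) · |εΛ ∩ ((1+ε)K − εc)| ≤ (1+2ε)ⁿ · vol(K)`. -/
theorem stmt_16 (n : ℕ) (K0 K : Set (Fin n → ℝ))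
    (hK0cpt : IsCompact K0) (hK0conv : Convex ℝ K0) (hK0int : (interior K0).Nonempty)
    (hKcpt : IsCompact K) (hKconv : Convex ℝ K) (hKint : (interior K).Nonempty)
    (b : Module.Basis (Fin n) ℝ (Fin n → ℝ))
    (hcov : (Submodule.span ℤ (Set.range b) : Set (Fin n → ℝ)) + K0 = Set.univ)
    (hK0sym : K0 = -K0) (c : Fin n → ℝ) (hK0sub : K0 ⊆ K - {c})
    (ε : ℝ) (hε : 0 < ε) :
    volume K ≤ ENNReal.ofReal (ε ^ n) * volume (ZSpan.fundamentalDomain b) *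
        (Nat.card ↥((ε • (Submodule.span ℤ (Set.range b) : Set (Fin n → ℝ)))
          ∩ ((1 + ε) • K - {ε • c})) : ENNReal)
    ∧ ENNReal.ofReal (ε ^ n) * volume (ZSpan.fundamentalDomain b) *
        (Nat.card ↥((ε • (Submodule.span ℤ (Set.range b) : Set (Fin n → ℝ)))
          ∩ ((1 + ε) • K - {ε • c})) : ENNReal)
      ≤ ENNReal.ofReal ((1 + 2 * ε) ^ n) * volume K := by
  classical
  set L := Submodule.span ℤ (Set.range b) with hLdef
  haveI : MeasurableVAdd ↥L (Fin n → ℝ) :=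
    (inferInstance : MeasurableVAdd ↥L.toAddSubgroup (Fin n → ℝ))
  haveI : VAddInvariantMeasure ↥L (Fin n → ℝ) volume :=
    (inferInstance : VAddInvariantMeasure ↥L.toAddSubgroup (Fin n → ℝ) volume)
  obtain ⟨F0, hF0K0, hF0m, hF0⟩ := exists_fd b K0 hK0cpt.measurableSet hcov
  set A : Set (Fin n → ℝ) := ε⁻¹ • K with hA
  have hεA : ε • A = K := by rw [hA, smul_inv_smul₀ hε.ne']
  have hAconv : Convex ℝ A := hKconv.smul _
  have hAcpt : IsCompact A := hKcpt.smul ε⁻¹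
  set D : Set (Fin n → ℝ) := (1 + ε) • A - {c} with hD
  set S : Set (Fin n → ℝ) := (L : Set (Fin n → ℝ)) ∩ D with hS
  have hK0sub' : K0 ⊆ ε • A - {c} := by rw [hεA]; exact hK0sub
  -- membership lemma
  have hDmem : ∀ x f : Fin n → ℝ, x ∈ A → f ∈ K0 → x - f ∈ D := by
    intro x f hx hf
    have hnf : -f ∈ K0 := by rw [hK0sym]; exact Set.neg_mem_neg.2 hf
    obtain ⟨y, hy, w, hw, hyw⟩ := Set.mem_sub.1 (hK0sub' hnf)
    obtain ⟨a, ha, rfl⟩ := hy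
    have hw' : w = c := hw
    refine Set.mem_sub.2 ⟨x + ε • a, ?_, c, Set.mem_singleton _, ?_⟩
    · have hsplit : (1 + ε) • A = (1 : ℝ) • A + ε • A := hAconv.add_smul zero_le_one hε.le
      rw [hsplit, one_smul]
      exact Set.add_mem_add hx ⟨a, ha, rfl⟩
    · have h1 : ε • a - c = -f := by rw [← hw']; exact hyw
      have h2 : f = c - ε • a := by rw [← neg_neg f, ← h1]; abel
      rw [h2]; abel
  -- finiteness
  have hDcpt : IsCompact D := by
    rw [hD, sub_singleton_eq_vadd]
    exact (hAcpt.smul (1 + ε)).vadd _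
  have hLclosed : IsClosed (L : Set (Fin n → ℝ)) :=
    AddSubgroup.isClosed_of_discrete (H := L.toAddSubgroup)
  have hSfin : S.Finite := by
    have hScpt : IsCompact S := hDcpt.inter_left hLclosed
    have hdL : DiscreteTopology ↥(L : Set (Fin n → ℝ)) := by
      have i : DiscreteTopology ↥L := inferInstance
      exact i
    have hdisc : DiscreteTopology ↥S :=
      DiscreteTopology.of_subset hdL Set.inter_subset_left
    exact hScpt.finite (isDiscrete_iff_discreteTopology.mpr hdisc)
  set T : Set ↥L := {g : ↥L | (g : Fin n → ℝ) ∈ D} with hT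
  have hTfin : T.Finite := by
    have hTeq : T = (Subtype.val) ⁻¹' S := by
      ext g; simp only [hT, hS, Set.mem_setOf_eq, Set.mem_preimage, Set.mem_inter_iff]
      exact ⟨fun h => ⟨g.2, h⟩, fun h => h.2⟩
    rw [hTeq]
    exact hSfin.preimage Subtype.val_injective.injOn
  have hScard : Nat.card ↥S = hTfin.toFinset.card := by
    have himg : S = Subtype.val '' T := by
      ext x; constructor
      · rintro ⟨hxL, hxD⟩; exact ⟨⟨x, hxL⟩, hxD, rfl⟩
      · rintro ⟨g, hg, rfl⟩; exact ⟨g.2, hg⟩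
    rw [Nat.card_coe_set_eq, himg, Set.ncard_image_of_injective _ Subtype.val_injective,
      Set.ncard_eq_toFinset_card _ hTfin]
  -- the goal's set equals ε • S
  have hgoalset : (ε • (L : Set (Fin n → ℝ))) ∩ ((1 + ε) • K - {ε • c}) = ε • S := by
    rw [hS, Set.smul_set_inter₀ hε.ne']
    congr 1
    rw [hD, smul_set_sub_singleton, smul_smul, mul_comm, ← smul_smul, hεA]
  have hcardeq : Nat.card ↥(ε • S) = Nat.card ↥S := by
    rw [Nat.card_coe_set_eq, Nat.card_coe_set_eq, ← Set.image_smul,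
      Set.ncard_image_of_injective _ (smul_right_injective _ hε.ne')]
  have hfinrank : Module.finrank ℝ (Fin n → ℝ) = n := Module.finrank_fin_fun ℝ
  have hvolK : volume K = ENNReal.ofReal (ε ^ n) * volume A := by
    rw [← hεA, MeasureTheory.Measure.addHaar_smul_of_nonneg volume hε.le, hfinrank]
  have hvolF0 : volume F0 = volume (ZSpan.fundamentalDomain b) :=
    hF0.measure_eq (ZSpan.isAddFundamentalDomain b volume)
  -- lower bound core
  have hempty : ∀ g : ↥L, (g : Fin n → ℝ) ∉ D → A ∩ (g +ᵥ F0) = ∅ := by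
    intro g hgD
    rw [Set.eq_empty_iff_forall_notMem]
    rintro x ⟨hxA, hxg⟩
    obtain ⟨f, hf, rfl⟩ := hxg
    have hx' : (g : Fin n → ℝ) + f ∈ A := hxA
    have : ((g : Fin n → ℝ) + f) - f ∈ D := hDmem _ _ hx' (hF0K0 hf)
    simp only [add_sub_cancel_right] at this
    exact hgD this
  have hlower : volume A ≤ volume F0 * (Nat.card ↥S : ENNReal) := by
    have key : volume A = ∑' g : ↥L, volume (A ∩ (g +ᵥ F0)) := hF0.measure_eq_tsum' A
    have hzero : ∀ g : ↥L, g ∉ hTfin.toFinset → volume (A ∩ (g +ᵥ F0)) = 0 := by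
      intro g hg
      rw [hempty g (by simpa [hTfin.mem_toFinset, hT] using hg)]
      simp
    rw [key, tsum_eq_sum hzero]
    calc ∑ g ∈ hTfin.toFinset, volume (A ∩ (g +ᵥ F0))
        ≤ ∑ g ∈ hTfin.toFinset, volume F0 := by
          refine Finset.sum_le_sum fun g _ => ?_
          calc volume (A ∩ (g +ᵥ F0)) ≤ volume (g +ᵥ F0) :=
                measure_mono Set.inter_subset_right
            _ = volume F0 := MeasureTheory.measure_vadd volume g F0
      _ = hTfin.toFinset.card • volume F0 := by rw [Finset.sum_const]
      _ = volume F0 * (Nat.card ↥S : ENNReal) := by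
          rw [hScard, nsmul_eq_mul, mul_comm]
  -- upper bound core
  have hupper : volume F0 * (Nat.card ↥S : ENNReal) ≤
      ENNReal.ofReal ((1 + 2 * ε) ^ n) * volume A := by
    have hdisj : (hTfin.toFinset : Set ↥L).Pairwise
        (Function.onFun (AEDisjoint volume) fun g : ↥L => g +ᵥ F0) :=
      fun g _ g' _ hne => hF0.aedisjoint hne
    have hmeas : ∀ g ∈ hTfin.toFinset, NullMeasurableSet (g +ᵥ F0) volume := by
      intro g _
      have hveq : (g +ᵥ F0 : Set (Fin n → ℝ)) = (fun x => x - (g : Fin n → ℝ)) ⁻¹' F0 := by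
        ext x; constructor
        · rintro ⟨f, hf, rfl⟩
          show ((g : Fin n → ℝ) + f) - (g : Fin n → ℝ) ∈ F0
          simpa using hf
        · intro h
          exact ⟨x - (g : Fin n → ℝ), h, by show (g : Fin n → ℝ) + _ = x; abel⟩
      rw [hveq]
      exact (hF0m.preimage (measurable_sub_const _)).nullMeasurableSet
    have hU : volume (⋃ g ∈ hTfin.toFinset, (g +ᵥ F0)) =
        ∑ g ∈ hTfin.toFinset, volume (g +ᵥ F0) := measure_biUnion_finset₀ hdisj hmeas
    have hUsub : (⋃ g ∈ hTfin.toFinset, (g +ᵥ F0)) ⊆ (1 + 2 * ε) • A - {c + c} := by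
      intro x hx
      simp only [Set.mem_iUnion, exists_prop] at hx
      obtain ⟨g, hg, hxg⟩ := hx
      obtain ⟨f, hf, rfl⟩ := hxg
      have hgD : (g : Fin n → ℝ) ∈ D := by simpa [hTfin.mem_toFinset, hT] using hg
      obtain ⟨y, hy, w, hw, hyw⟩ := Set.mem_sub.1 hgD
      have hw' : w = c := hw
      obtain ⟨z, hz, w2, hw2, hzw⟩ := Set.mem_sub.1 (hK0sub' (hF0K0 hf))
      have hw2' : w2 = c := hw2
      refine Set.mem_sub.2 ⟨y + z, ?_, c + c, Set.mem_singleton _, ?_⟩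
      · have hsplit : (1 + 2 * ε) • A = (1 + ε) • A + ε • A := by
          rw [show (1 + 2 * ε) = (1 + ε) + ε by ring]
          exact hAconv.add_smul (by positivity) hε.le
        rw [hsplit]
        exact Set.add_mem_add hy hz
      · show y + z - (c + c) = (g : Fin n → ℝ) + f
        rw [hw'] at hyw; rw [hw2'] at hzw
        rw [← hyw, ← hzw]; abel
    calc volume F0 * (Nat.card ↥S : ENNReal)
        = ∑ g ∈ hTfin.toFinset, volume (g +ᵥ F0) := by
          simp only [MeasureTheory.measure_vadd, Finset.sum_const, hScard, nsmul_eq_mul, mul_comm]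
      _ = volume (⋃ g ∈ hTfin.toFinset, (g +ᵥ F0)) := hU.symm
      _ ≤ volume ((1 + 2 * ε) • A - {c + c}) := measure_mono hUsub
      _ = volume ((1 + 2 * ε) • A) := by
          rw [sub_singleton_eq_vadd]; exact MeasureTheory.measure_vadd volume _ _
      _ = ENNReal.ofReal ((1 + 2 * ε) ^ n) * volume A := by
          rw [MeasureTheory.Measure.addHaar_smul_of_nonneg volume (by positivity), hfinrank]
  rw [hgoalset, hcardeq]
  constructor
  · rw [hvolK, ← hvolF0, mul_assoc]
    exact mul_le_mul_right hlower _
  · rw [hvolK, ← hvolF0, mul_assoc]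
    refine le_trans (mul_le_mul_right hupper _) ?_
    rw [mul_left_comm]
end

section
/- Let K ⊆ R^n be a convex body. Then ∫_{R^n} vol_n(K[c]) dc = 2^{−n} · vol_n(K)^2, where K[c] = (K − c) ∩ (c − K); moreover K[c] is nonempty only for c ∈ K, so the integral may be taken over K. In particular there exists c ∈ K with vol_n(K[c]) ≥ 2^{−n} · vol_n(K), i.e. the Kovner–Besicovitch symmetry measure satisfies Sym_kb(K) = max_{c ∈ K} vol_n(K[c])/vol_n(K) ≥ 2^{−n}. -/
open MeasureTheory Pointwise ENNReal

/-- For a convex body `K ⊆ ℝⁿ`,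
`∫_{ℝⁿ} vol(K[c]) dc = 2^{−n} vol(K)²` where `K[c] = (K − c) ∩ (c − K)`; moreover `K[c]` is
nonempty only for `c ∈ K`, and there exists `c ∈ K` with `vol(K[c]) ≥ 2^{−n} vol(K)`,
i.e. the Kovner–Besicovitch symmetry measure of `K` is at least `2^{−n}`. -/
theorem stmt_19 (n : ℕ) (K : Set (Fin n → ℝ))
    (hKcpt : IsCompact K) (hKconv : Convex ℝ K) (hKint : (interior K).Nonempty) :
    (∫⁻ c : Fin n → ℝ, volume ((K - {c}) ∩ ({c} - K))) = volume K ^ 2 / 2 ^ n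
    ∧ (∀ c : Fin n → ℝ, ((K - {c}) ∩ ({c} - K)).Nonempty → c ∈ K)
    ∧ ∃ c ∈ K, volume K / 2 ^ n ≤ volume ((K - {c}) ∩ ({c} - K)) := by
  classical
  have hKmeas : MeasurableSet K := hKcpt.isClosed.measurableSet
  have hmem1 : ∀ c x : Fin n → ℝ, x ∈ K - {c} ↔ x + c ∈ K := by
    intro c x
    simp [Set.sub_singleton, sub_eq_iff_eq_add]
  have hmem2 : ∀ c x : Fin n → ℝ, x ∈ ({c} : Set (Fin n → ℝ)) - K ↔ c - x ∈ K := by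
    intro c x
    constructor
    · rintro ⟨b, hb, a, ha, rfl⟩
      rw [Set.mem_singleton_iff] at hb
      subst hb
      simpa using ha
    · intro h
      exact ⟨c, rfl, c - x, h, sub_sub_cancel c x⟩
  -- Part 2
  have part2 : ∀ c : Fin n → ℝ, ((K - {c}) ∩ ({c} - K)).Nonempty → c ∈ K := by
    rintro c ⟨x, hx1, hx2⟩
    rw [hmem1] at hx1
    rw [hmem2] at hx2
    have hc : (1/2 : ℝ) • (x + c) + (1/2 : ℝ) • (c - x) = c := by
      rw [← smul_add]
      have : (x + c) + (c - x) = c + c := by abel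
      rw [this, ← two_smul ℝ c, smul_smul]
      norm_num
    exact hc ▸ hKconv hx1 hx2 (by norm_num) (by norm_num) (by norm_num)
  -- the product set
  set S : Set ((Fin n → ℝ) × (Fin n → ℝ)) :=
    (Prod.snd ⁻¹' K) ∩ ((fun p : (Fin n → ℝ) × (Fin n → ℝ) => (2:ℝ) • p.1 - p.2) ⁻¹' K) with hS
  have hSmeas : MeasurableSet S :=
    (measurable_snd hKmeas).inter
      (((measurable_fst.const_smul (2:ℝ)).sub measurable_snd) hKmeas)
  -- Step A: each fiber volume
  have stepA : ∀ c : Fin n → ℝ,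
      volume ((K - {c}) ∩ ({c} - K)) = volume (Prod.mk c ⁻¹' S) := by
    intro c
    have hset : (K - {c}) ∩ ({c} - K) = (fun x => x + c) ⁻¹' (Prod.mk c ⁻¹' S) := by
      ext x
      simp only [Set.mem_inter_iff, Set.mem_preimage, hS, hmem1, hmem2]
      have : (2:ℝ) • c - (x + c) = c - x := by
        rw [two_smul]; abel
      rw [this]
    rw [hset, measure_preimage_add_right]
  have hABBR : ∀ c : Fin n → ℝ,
      volume ((K - {c}) ∩ ({c} - K)) = volume (Prod.mk c ⁻¹' S) := stepA
  -- Part 1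
  have part1 : (∫⁻ c : Fin n → ℝ, volume ((K - {c}) ∩ ({c} - K)))
      = volume K ^ 2 / 2 ^ n := by
    have h1 : (∫⁻ c : Fin n → ℝ, volume ((K - {c}) ∩ ({c} - K)))
        = (volume.prod volume) S := by
      rw [Measure.prod_apply hSmeas]
      exact lintegral_congr fun c => stepA c
    rw [h1, Measure.prod_apply_symm hSmeas]
    have h2 : ∀ u : Fin n → ℝ,
        volume ((fun c => (c, u)) ⁻¹' S)
          = K.indicator (fun _ => volume K / 2 ^ n) u := by
      intro u
      by_cases hu : u ∈ K
      · have hslice : (fun c => (c, u)) ⁻¹' S = ((2:ℝ) • ·) ⁻¹' ((· + (-u)) ⁻¹' K) := by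
          ext c
          simp [hS, hu, sub_eq_add_neg]
        rw [Set.indicator_of_mem hu, hslice,
          Measure.addHaar_preimage_smul volume (two_ne_zero) _,
          measure_preimage_add_right]
        rw [Module.finrank_fintype_fun_eq_card, Fintype.card_fin]
        have habs : ENNReal.ofReal |((2:ℝ)^n)⁻¹| = ((2:ℝ≥0∞)^n)⁻¹ := by
          rw [abs_of_pos (by positivity), ENNReal.ofReal_inv_of_pos (by positivity),
            ENNReal.ofReal_pow (by norm_num)]
          norm_num
        rw [habs, ENNReal.div_eq_inv_mul]
      · have hslice : (fun c => (c, u)) ⁻¹' S = ∅ := by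
          ext c
          simp only [hS, Set.mem_preimage, Set.mem_inter_iff, Set.mem_empty_iff_false, iff_false]
          exact fun h => hu h.1
        rw [Set.indicator_of_notMem hu, hslice, measure_empty]
    rw [lintegral_congr h2, lintegral_indicator_const hKmeas]
    rw [sq, ENNReal.div_eq_inv_mul, ENNReal.div_eq_inv_mul, mul_assoc]
  -- Part 3
  refine ⟨part1, part2, ?_⟩
  by_contra hcon
  push_neg at hcon
  set f : (Fin n → ℝ) → ℝ≥0∞ := fun c => volume (Prod.mk c ⁻¹' S) with hf
  have hfmeas : Measurable f := measurable_measure_prodMk_left hSmeas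
  have hKvol_lt : volume K < ⊤ := hKcpt.measure_lt_top
  have hKvol_pos : 0 < volume K :=
    lt_of_lt_of_le (isOpen_interior.measure_pos volume hKint) (measure_mono interior_subset)
  set A : ℝ≥0∞ := volume K / 2 ^ n with hA
  have hAlt : A < ⊤ := ENNReal.div_lt_top hKvol_lt.ne (by positivity)
  have hcon' : ∀ c ∈ K, f c < A := by
    intro c hc
    have := hcon c hc
    rw [stepA c] at this
    exact this
  have hzero : ∀ c ∉ K, f c = 0 := by
    intro c hc
    show volume (Prod.mk c ⁻¹' S) = 0
    rw [← stepA c]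
    have : (K - {c}) ∩ ({c} - K) = ∅ := by
      by_contra hne
      exact hc (part2 c (Set.nonempty_iff_ne_empty.2 hne))
    rw [this, measure_empty]
  have hint : ∫⁻ c in K, f c = volume K ^ 2 / 2 ^ n := by
    have : ∫⁻ c, f c = volume K ^ 2 / 2 ^ n := by
      rw [← part1]; exact lintegral_congr fun c => (stepA c).symm
    rw [← this, ← lintegral_indicator hKmeas]
    refine lintegral_congr fun c => ?_
    by_cases hc : c ∈ K
    · rw [Set.indicator_of_mem hc]
    · rw [Set.indicator_of_notMem hc, hzero c hc]
  have hint_ne : ∫⁻ c in K, f c ≠ ⊤ := by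
    rw [hint]
    exact (ENNReal.div_lt_top (ENNReal.pow_ne_top hKvol_lt.ne) (by positivity)).ne
  have hconstint : ∫⁻ _ in K, A = volume K ^ 2 / 2 ^ n := by
    rw [setLIntegral_const, hA, ENNReal.div_eq_inv_mul, sq, ENNReal.div_eq_inv_mul, mul_assoc]
  have hsub : ∫⁻ c in K, (A - f c) = 0 := by
    rw [lintegral_sub hfmeas hint_ne
      ((ae_restrict_iff' hKmeas).2 (Filter.Eventually.of_forall fun c hc => (hcon' c hc).le)),
      hconstint, hint, tsub_self]
  have hae : ∀ᵐ c ∂(volume.restrict K), A - f c = 0 :=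
    (lintegral_eq_zero_iff (measurable_const.sub hfmeas)).mp hsub
  have hne : volume.restrict K ≠ 0 := by
    rw [← Measure.measure_univ_eq_zero.ne]
    rw [Measure.restrict_apply_univ]
    exact hKvol_pos.ne'
  haveI : (ae (volume.restrict K)).NeBot := ae_neBot.2 hne
  obtain ⟨c, hc1, hc2⟩ := (hae.and (ae_restrict_mem hKmeas)).exists
  have : A ≤ f c := tsub_eq_zero_iff_le.mp hc1
  exact absurd this (not_le.2 (hcon' c hc2))
end
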